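/- arXiv:math/0006081 — 11 statements merged into one kernel-verified Lean document; each statement's English description precedes it below -/
import Mathlib

section
/- Let G be a topological group and let M be a universal minimal compact G-space. Then the action of G on M is not 3-transitive; that is, it is not the case that M has at least 3 points and for any two triples (a1,a2,a3), (b1,b2,b3) of pairwise distinct points of M there exists g in G with g·a1 = b1, g·a2 = b2 and g·a3 = b3. -/
open Set Filter Topology TopologicalSpace Pointwise

universe u v

/-! ### The Vietoris hyperspace of closed subsets -/

/-- The hyperspace of closed subsets of `X`, to be given the Vietoris topology. -/
@[ext] structure HExp (X : Type*) [TopologicalSpace X] where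
  carrier : Set X
  isClosed' : IsClosed carrier

namespace HExp

variable {X : Type*} [TopologicalSpace X]

/-- Subbasis for the Vietoris topology. -/
def sub (X : Type*) [TopologicalSpace X] : Set (Set (HExp X)) :=
  {t | ∃ U : Set X, IsOpen U ∧ t = {A : HExp X | A.1 ⊆ U}} ∪
  {t | ∃ U : Set X, IsOpen U ∧ t = {A : HExp X | (A.1 ∩ U).Nonempty}}

instance : TopologicalSpace (HExp X) := generateFrom (sub X)

lemma isOpen_miss {U : Set X} (hU : IsOpen U) : IsOpen {A : HExp X | A.1 ⊆ U} :=
  isOpen_generateFrom_of_mem (Or.inl ⟨U, hU, rfl⟩)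

lemma isOpen_hit {U : Set X} (hU : IsOpen U) : IsOpen {A : HExp X | (A.1 ∩ U).Nonempty} :=
  isOpen_generateFrom_of_mem (Or.inr ⟨U, hU, rfl⟩)

/-- Compactness of the Vietoris hyperspace. -/
instance [CompactSpace X] : CompactSpace (HExp X) := by
  refine ⟨isCompact_iff_ultrafilter_le_nhds.2 fun F _ => ?_⟩
  classical
  set L : Set X := {x | ∀ V : Set X, IsOpen V → x ∈ V →
    {A : HExp X | (A.1 ∩ V).Nonempty} ∈ F} with hL
  have hLc : IsClosed L := by
    rw [← isOpen_compl_iff, isOpen_iff_forall_mem_open]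
    intro x hx
    simp only [hL, mem_compl_iff, mem_setOf_eq, not_forall] at hx
    obtain ⟨V, hV, hxV, hVF⟩ := hx
    exact ⟨V, fun y hy hyL => hVF (hyL V hV hy), hV, hxV⟩
  refine ⟨⟨L, hLc⟩, mem_univ _, ?_⟩
  have : (𝓝 (⟨L, hLc⟩ : HExp X)) = ⨅ s ∈ { s | (⟨L, hLc⟩ : HExp X) ∈ s ∧ s ∈ sub X }, 𝓟 s :=
    nhds_generateFrom
  rw [this]
  refine le_iInf₂ fun s hs => le_principal_iff.2 ?_
  obtain ⟨hmem, hsub⟩ := hs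
  rcases hsub with ⟨U, hU, rfl⟩ | ⟨U, hU, rfl⟩
  · -- L ⊆ U; show the "miss" set is in the filter
    by_contra h
    have h' : {A : HExp X | (A.1 ∩ Uᶜ).Nonempty} ∈ F := by
      have := (Ultrafilter.compl_mem_iff_notMem).2 h
      refine mem_of_superset this ?_
      intro A hA
      simp only [mem_compl_iff, mem_setOf_eq] at hA ⊢
      rcases not_subset.1 hA with ⟨a, ha, haU⟩
      exact ⟨a, ha, haU⟩
    have hKc : IsCompact (Uᶜ) := hU.isClosed_compl.isCompact
    have key : ∀ x : X, x ∈ Uᶜ → ∃ V : Set X, IsOpen V ∧ x ∈ V ∧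
        {A : HExp X | A.1 ∩ V = ∅} ∈ F := by
      intro x hx
      have hxL : x ∉ L := fun hxL => hx (hmem hxL)
      simp only [hL, mem_setOf_eq, not_forall] at hxL
      obtain ⟨V, hV, hxV, hVF⟩ := hxL
      refine ⟨V, hV, hxV, ?_⟩
      have := (Ultrafilter.compl_mem_iff_notMem).2 hVF
      refine mem_of_superset this ?_
      intro A hA
      simp only [mem_compl_iff, mem_setOf_eq, not_nonempty_iff_eq_empty] at hA ⊢
      exact hA
    choose V hVo hVx hVF using key
    obtain ⟨t, ht⟩ := hKc.elim_finite_subcover (fun x : ↥(Uᶜ) => V x x.2)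
      (fun x => hVo x x.2) (fun x hx => mem_iUnion.2 ⟨⟨x, hx⟩, hVx x hx⟩)
    have hbig : {A : HExp X | (A.1 ∩ Uᶜ).Nonempty} ∩
        ⋂ i ∈ t, {A : HExp X | A.1 ∩ V i i.2 = ∅} ∈ F :=
      inter_mem h' ((biInter_mem t.finite_toSet).2 fun i _ => hVF i i.2)
    obtain ⟨A, hA1, hA2⟩ := Ultrafilter.nonempty_of_mem hbig
    obtain ⟨a, haA, haU⟩ := hA1
    obtain ⟨i, hi⟩ := mem_iUnion.1 (ht haU)
    simp only [mem_iUnion] at hi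
    obtain ⟨hit, hai⟩ := hi
    have hAi : A.1 ∩ V i i.2 = ∅ := by
      have := Set.mem_iInter₂.1 hA2 i hit
      exact this
    exact absurd hAi (by
      refine (Set.nonempty_iff_ne_empty.1 ⟨a, haA, hai⟩))
  · obtain ⟨x, hxL, hxU⟩ := hmem
    exact hxL U hU hxU

variable [CompactSpace X] [T2Space X]

lemma sep_point_closed {x : X} {B : Set X} (hB : IsClosed B) (hx : x ∉ B) :
    ∃ W O : Set X, IsOpen W ∧ IsOpen O ∧ x ∈ W ∧ B ⊆ O ∧ Disjoint W O := by
  obtain ⟨W, O, hW, hO, hxW, hBO, hd⟩ :=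
    SeparatedNhds.of_isCompact_isCompact isCompact_singleton hB.isCompact
      (disjoint_singleton_left.2 hx)
  exact ⟨W, O, hW, hO, hxW (mem_singleton x), hBO, hd⟩

/-- If `x ∈ A.1 \ B.1` then `A` and `B` have disjoint neighbourhoods. -/
lemma t2_aux {A B : HExp X} {x : X} (hxA : x ∈ A.1) (hxB : x ∉ B.1) :
    ∃ u v : Set (HExp X), IsOpen u ∧ IsOpen v ∧ A ∈ u ∧ B ∈ v ∧ Disjoint u v := by
  obtain ⟨W, O, hW, hO, hxW, hBO, hd⟩ := sep_point_closed B.2 hxB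
  refine ⟨{C : HExp X | (C.1 ∩ W).Nonempty}, {C : HExp X | C.1 ⊆ O},
    isOpen_hit hW, isOpen_miss hO, ⟨x, hxA, hxW⟩, hBO, ?_⟩
  rw [Set.disjoint_left]
  rintro C ⟨c, hcC, hcW⟩ hCO
  exact (Set.disjoint_left.1 hd) hcW (hCO hcC)

instance : T2Space (HExp X) := by
  refine ⟨fun A B hAB => ?_⟩
  have : A.1 ≠ B.1 := fun h => hAB (HExp.ext h)
  rcases (not_and_or.1 (fun h : A.1 ⊆ B.1 ∧ B.1 ⊆ A.1 =>
      this (subset_antisymm h.1 h.2))) with h | h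
  · obtain ⟨x, hxA, hxB⟩ := not_subset.1 h
    exact t2_aux hxA hxB
  · obtain ⟨x, hxB, hxA⟩ := not_subset.1 h
    obtain ⟨u, v, hu, hv, hBu, hAv, hd⟩ := t2_aux hxB hxA
    exact ⟨v, u, hv, hu, hAv, hBu, hd.symm⟩

section Action

variable {G : Type*} [Group G] [TopologicalSpace G] [MulAction G X] [ContinuousSMul G X]

noncomputable instance : MulAction G (HExp X) where
  smul g A := ⟨g • A.1, A.2.smul g⟩
  one_smul A := HExp.ext (one_smul G A.1)
  mul_smul g h A := HExp.ext (mul_smul g h A.1)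

@[simp] lemma smul_coe (g : G) (A : HExp X) : (g • A).1 = g • A.1 := rfl

instance : ContinuousSMul G (HExp X) := by
  constructor
  rw [show (instTopologicalSpace : TopologicalSpace (HExp X)) = generateFrom (sub X) from rfl]
  refine continuous_generateFrom_iff.2 ?_
  rintro s (⟨U, hU, rfl⟩ | ⟨U, hU, rfl⟩)
  · rw [isOpen_iff_forall_mem_open]
    rintro ⟨g, A⟩ (h : (g • A).1 ⊆ U)
    have hS : IsOpen {p : G × X | p.1 • p.2 ∈ U} := hU.preimage continuous_smul
    have hsubset : {g} ×ˢ A.1 ⊆ {p : G × X | p.1 • p.2 ∈ U} := by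
      rintro ⟨g', a⟩ ⟨hg', ha⟩
      simp only [mem_singleton_iff] at hg'; subst hg'
      exact h (Set.smul_mem_smul_set ha)
    obtain ⟨u, w, hu, hw, hgu, hAw, huw⟩ :=
      generalized_tube_lemma isCompact_singleton A.2.isCompact hS hsubset
    refine ⟨u ×ˢ {B : HExp X | B.1 ⊆ w}, ?_, hu.prod (isOpen_miss hw),
      Set.mk_mem_prod (hgu (mem_singleton g)) hAw⟩
    rintro ⟨g', B⟩ ⟨hg', hB⟩
    show (g' • B).1 ⊆ U
    rintro y ⟨b, hb, rfl⟩
    exact huw (Set.mk_mem_prod hg' (hB hb))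
  · rw [isOpen_iff_forall_mem_open]
    rintro ⟨g, A⟩ (h : ((g • A).1 ∩ U).Nonempty)
    obtain ⟨y, hyA, hyU⟩ := h
    obtain ⟨a, ha, rfl⟩ := hyA
    have hS : IsOpen {p : G × X | p.1 • p.2 ∈ U} := hU.preimage continuous_smul
    obtain ⟨u, w, hu, hw, hgu, haw, huw⟩ := isOpen_prod_iff.1 hS g a hyU
    refine ⟨u ×ˢ {B : HExp X | (B.1 ∩ w).Nonempty}, ?_, hu.prod (isOpen_hit hw),
      Set.mk_mem_prod hgu ⟨a, ha, haw⟩⟩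
    rintro ⟨g', B⟩ ⟨hg', b, hbB, hbw⟩
    exact ⟨g' • b, Set.smul_mem_smul_set hbB, huw (Set.mk_mem_prod hg' hbw)⟩


lemma smul_subset_smul_iff {G : Type*} [Group G] [MulAction G X] {g : G} {s t : Set X} :
    g • s ⊆ g • t ↔ s ⊆ t := by
  constructor
  · intro h
    have := Set.smul_set_mono (a := g⁻¹) h
    simpa [inv_smul_smul] using this
  · exact Set.smul_set_mono

/-- The set of elements comparable with a fixed `A` is closed. -/
lemma isClosed_comparable (A : HExp X) :
    IsClosed {S : HExp X | S.1 ⊆ A.1 ∨ A.1 ⊆ S.1} := by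
  rw [← isOpen_compl_iff, isOpen_iff_forall_mem_open]
  intro S hS
  have h1 : ¬S.1 ⊆ A.1 ∧ ¬A.1 ⊆ S.1 := not_or.1 hS
  obtain ⟨s, hsS, hsA⟩ := not_subset.1 h1.1
  obtain ⟨a, haA, haS⟩ := not_subset.1 h1.2
  obtain ⟨Vs, OA, hVs, hOA, hsVs, hAOA, hd1⟩ := sep_point_closed A.2 hsA
  obtain ⟨Va, OS, hVa, hOS, haVa, hSOS, hd2⟩ := sep_point_closed S.2 haS
  refine ⟨{T : HExp X | (T.1 ∩ Vs).Nonempty} ∩ {T : HExp X | T.1 ⊆ OS}, ?_,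
    (isOpen_hit hVs).inter (isOpen_miss hOS), ⟨⟨s, hsS, hsVs⟩, hSOS⟩⟩
  rintro T ⟨⟨t, htT, htVs⟩, hTOS⟩
  simp only [mem_compl_iff, mem_setOf_eq, not_or]
  constructor
  · exact fun h => (Set.disjoint_left.1 hd1) htVs (hAOA (h htT))
  · exact fun h => (Set.disjoint_left.1 hd2) haVa (hTOS (h haA))

/-- Chains (families of pairwise-comparable closed sets) form a closed subset
of the double hyperspace. -/
lemma isClosed_chains :
    IsClosed {C : HExp (HExp X) | ∀ A ∈ C.1, ∀ B ∈ C.1, A.1 ⊆ B.1 ∨ B.1 ⊆ A.1} := by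
  rw [← isOpen_compl_iff, isOpen_iff_forall_mem_open]
  intro C hC
  simp only [mem_compl_iff, mem_setOf_eq, not_forall] at hC
  obtain ⟨A, hA, B, hB, hcomp⟩ := hC
  have h1 : ¬A.1 ⊆ B.1 ∧ ¬B.1 ⊆ A.1 := not_or.1 hcomp
  obtain ⟨a, haA, haB⟩ := not_subset.1 h1.1
  obtain ⟨b, hbB, hbA⟩ := not_subset.1 h1.2
  obtain ⟨Va, Ob, hVa, hOb, haVa, hBOb, hd1⟩ := sep_point_closed B.2 haB
  obtain ⟨Vb, Oa, hVb, hOa, hbVb, hAOa, hd2⟩ := sep_point_closed A.2 hbA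
  set 𝒜 : Set (HExp X) := {S | (S.1 ∩ Va).Nonempty ∧ S.1 ⊆ Oa} with h𝒜
  set ℬ : Set (HExp X) := {S | (S.1 ∩ Vb).Nonempty ∧ S.1 ⊆ Ob} with hℬ
  have h𝒜o : IsOpen 𝒜 := (isOpen_hit hVa).inter (isOpen_miss hOa)
  have hℬo : IsOpen ℬ := (isOpen_hit hVb).inter (isOpen_miss hOb)
  refine ⟨{D : HExp (HExp X) | (D.1 ∩ 𝒜).Nonempty} ∩ {D | (D.1 ∩ ℬ).Nonempty}, ?_,
    (isOpen_hit h𝒜o).inter (isOpen_hit hℬo),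
    ⟨⟨A, hA, ⟨a, haA, haVa⟩, hAOa⟩, ⟨B, hB, ⟨b, hbB, hbVb⟩, hBOb⟩⟩⟩
  rintro D ⟨⟨A', hA'D, ⟨a', ha'A', ha'Va⟩, hA'Oa⟩, ⟨B', hB'D, ⟨b', hb'B', hb'Vb⟩, hB'Ob⟩⟩
  simp only [mem_compl_iff, mem_setOf_eq, not_forall]
  refine ⟨A', hA'D, B', hB'D, ?_⟩
  rw [not_or]
  constructor
  · exact fun h => (Set.disjoint_left.1 hd1) ha'Va (hB'Ob (h ha'A'))
  · exact fun h => (Set.disjoint_left.1 hd2) hb'Vb (hA'Oa (h hb'B'))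

/-- In a regular space, shrink an open neighbourhood to one with closure inside. -/
lemma shrink {x : X} {w : Set X} (hw : IsOpen w) (hxw : x ∈ w) :
    ∃ u : Set X, IsOpen u ∧ x ∈ u ∧ closure u ⊆ w := by
  obtain ⟨t, htx, htc, htw⟩ := exists_mem_nhds_isClosed_subset (hw.mem_nhds hxw)
  exact ⟨interior t, isOpen_interior, mem_interior_iff_mem_nhds.2 htx,
    (closure_minimal interior_subset htc).trans htw⟩

end Action

end HExp

/-- For every topological group `G`, the action of `G` on a universal minimal compact
`G`-space `M` is not 3-transitive. -/
theorem statement0 (G : Type u) [Group G] [TopologicalSpace G] [IsTopologicalGroup G]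
    (M : Type v) [TopologicalSpace M] [CompactSpace M] [T2Space M] [Nonempty M]
    [MulAction G M] [ContinuousSMul G M]
    (hmin : ∀ A : Set M, A.Nonempty → IsClosed A →
      (∀ (g : G), ∀ x ∈ A, g • x ∈ A) → A = Set.univ)
    (huniv : ∀ (Y : Type v) [TopologicalSpace Y] [CompactSpace Y] [T2Space Y]
      [MulAction G Y] [ContinuousSMul G Y], Nonempty Y →
      ∃ f : M → Y, Continuous f ∧ ∀ (g : G) (x : M), f (g • x) = g • f x) :
    ¬ ((∃ x y z : M, x ≠ y ∧ x ≠ z ∧ y ≠ z) ∧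
      ∀ a₁ a₂ a₃ b₁ b₂ b₃ : M,
        a₁ ≠ a₂ → a₁ ≠ a₃ → a₂ ≠ a₃ → b₁ ≠ b₂ → b₁ ≠ b₃ → b₂ ≠ b₃ →
        ∃ g : G, g • a₁ = b₁ ∧ g • a₂ = b₂ ∧ g • a₃ = b₃) := by
  classical
  rintro ⟨⟨x, p, q, hxp, hxq, hpq⟩, htrans⟩
  -- the collection of maximal chains of closed subsets of `M`
  set Φ : Set (HExp (HExp M)) := {C | (∀ A ∈ C.1, ∀ B ∈ C.1, A.1 ⊆ B.1 ∨ B.1 ⊆ A.1) ∧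
      ∀ F : HExp M, (∀ A ∈ C.1, F.1 ⊆ A.1 ∨ A.1 ⊆ F.1) → F ∈ C.1} with hΦdef
  -- Zorn's lemma: a maximal chain exists
  obtain ⟨c, hc⟩ : ∃ c, Maximal
      (· ∈ {c : Set (HExp M) | IsChain (fun A B : HExp M => A.1 ⊆ B.1) c}) c := by
    refine zorn_subset _ fun d hd hchain =>
      ⟨⋃₀ d, ?_, fun s hs => subset_sUnion_of_mem hs⟩
    intro A hA B hB hAB
    obtain ⟨s1, hs1, hAs1⟩ := hA
    obtain ⟨s2, hs2, hBs2⟩ := hB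
    rcases eq_or_ne s1 s2 with rfl | hne
    · exact hd hs1 hAs1 hBs2 hAB
    · rcases hchain hs1 hs2 hne with h | h
      · exact hd hs2 (h hAs1) hBs2 hAB
      · exact hd hs1 hAs1 (h hBs2) hAB
  have hmaxmem : ∀ F : HExp M, (∀ A ∈ c, F.1 ⊆ A.1 ∨ A.1 ⊆ F.1) → F ∈ c := by
    intro F hF
    have hins : IsChain (fun A B : HExp M => A.1 ⊆ B.1) (insert F c) :=
      hc.prop.insert fun B hB _ => hF B hB
    exact hc.2 hins (subset_insert F c) (mem_insert F c)
  have hcclosed : IsClosed c := by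
    rw [← closure_subset_iff_isClosed]
    intro S hS
    refine hmaxmem S fun A hA => ?_
    have hsub : c ⊆ {T : HExp M | T.1 ⊆ A.1 ∨ A.1 ⊆ T.1} := by
      intro B hB
      rcases eq_or_ne B A with rfl | hne
      · exact Or.inl subset_rfl
      · exact hc.prop hB hA hne
    exact closure_minimal hsub (HExp.isClosed_comparable A) hS
  have hC₀ : (⟨c, hcclosed⟩ : HExp (HExp M)) ∈ Φ := by
    refine ⟨fun A hA B hB => ?_, hmaxmem⟩
    rcases eq_or_ne A B with rfl | hne
    · exact Or.inl subset_rfl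
    · exact hc.prop hA hB hne
  -- Φ is G-invariant
  have hΦinv : ∀ (g : G) (C : HExp (HExp M)), C ∈ Φ → g • C ∈ Φ := by
    intro g C hC
    constructor
    · intro A hA B hB
      obtain ⟨A₀, hA₀, rfl⟩ := Set.mem_smul_set.1 hA
      obtain ⟨B₀, hB₀, rfl⟩ := Set.mem_smul_set.1 hB
      rcases hC.1 A₀ hA₀ B₀ hB₀ with h | h
      · exact Or.inl (HExp.smul_subset_smul_iff.2 h)
      · exact Or.inr (HExp.smul_subset_smul_iff.2 h)
    · intro F hF
      have hmem : g⁻¹ • F ∈ C.1 := by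
        refine hC.2 _ fun A hA => ?_
        rcases hF (g • A) (Set.smul_mem_smul_set hA) with h | h
        · left
          have := Set.smul_set_mono (a := g⁻¹) h
          simpa [inv_smul_smul] using this
        · right
          have := Set.smul_set_mono (a := g⁻¹) h
          simpa [inv_smul_smul] using this
      have : g • (g⁻¹ • F) ∈ (g • C).1 := Set.smul_mem_smul_set hmem
      rwa [smul_inv_smul] at this
  have hYinv : ∀ (g : G) (C : HExp (HExp M)), C ∈ closure Φ → g • C ∈ closure Φ :=
    fun g C hC => map_mem_closure (continuous_const_smul g) hC fun D hD => hΦinv g D hD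
  letI : MulAction G {C : HExp (HExp M) // C ∈ closure Φ} :=
    { smul := fun g C => ⟨g • C.1, hYinv g C.1 C.2⟩
      one_smul := fun C => Subtype.ext (one_smul G C.1)
      mul_smul := fun g h C => Subtype.ext (mul_smul g h C.1) }
  haveI : CompactSpace {C : HExp (HExp M) // C ∈ closure Φ} :=
    isCompact_iff_compactSpace.1 isClosed_closure.isCompact
  haveI : ContinuousSMul G {C : HExp (HExp M) // C ∈ closure Φ} := by
    constructor
    refine Continuous.subtype_mk ?_ _
    exact continuous_smul.comp
      (continuous_fst.prodMk (continuous_subtype_val.comp continuous_snd))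
  obtain ⟨f, hfc, hfe⟩ := huniv {C : HExp (HExp M) // C ∈ closure Φ}
    ⟨⟨⟨c, hcclosed⟩, subset_closure hC₀⟩⟩
  set C : HExp (HExp M) := (f x).1 with hCdef
  have hCcl : C ∈ closure Φ := (f x).2
  have hCchain : ∀ A ∈ C.1, ∀ B ∈ C.1, A.1 ⊆ B.1 ∨ B.1 ⊆ A.1 :=
    closure_minimal (fun D (hD : D ∈ Φ) => hD.1) HExp.isClosed_chains hCcl
  have hCinv : ∀ g : G, g • x = x → g • C = C := by
    intro g hg
    have h1 := hfe g x
    rw [hg] at h1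
    exact (congrArg Subtype.val h1).symm
  -- classification of the members of C
  have hclass : ∀ A, A ∈ C.1 → (A.1 ⊆ {x} ∨ ∀ z : M, z ≠ x → z ∈ A.1) := by
    intro A hA
    by_contra hcon
    rw [not_or] at hcon
    obtain ⟨h1, h2⟩ := hcon
    obtain ⟨y, hyA, hyx⟩ := not_subset.1 h1
    push_neg at h2
    obtain ⟨z, hzx, hzA⟩ := h2
    have hyx' : y ≠ x := hyx
    have hyz : y ≠ z := fun h => hzA (h ▸ hyA)
    obtain ⟨g, hg1, hg2, hg3⟩ :=
      htrans x y z x z y (Ne.symm hyx') (Ne.symm hzx) hyz (Ne.symm hzx) (Ne.symm hyx') hyz.symm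
    have hgC := hCinv g hg1
    have hgA : g • A ∈ C.1 := by
      have h3 : g • A ∈ (g • C).1 := Set.smul_mem_smul_set hA
      rwa [hgC] at h3
    rcases hCchain A hA (g • A) hgA with h | h
    · obtain ⟨w, hwA, hwy⟩ := Set.mem_smul_set.1 (h hyA)
      have hw : w = z := (smul_left_cancel_iff g).1 (hwy.trans hg3.symm)
      exact hzA (hw ▸ hwA)
    · have h3 : g • y ∈ (g • A).1 := Set.smul_mem_smul_set hyA
      rw [hg2] at h3
      exact hzA (h h3)
  -- choose open sets around x, p, q with pairwise disjoint closures
  obtain ⟨uxp, vpx, ho1, ho2, hx1, hp1, hd1⟩ := t2_separation hxp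
  obtain ⟨uxq, vqx, ho3, ho4, hx2, hq1, hd2⟩ := t2_separation hxq
  obtain ⟨upq, vqp, ho5, ho6, hp2, hq2, hd3⟩ := t2_separation hpq
  obtain ⟨U, hUo, hxU, hUcl⟩ := HExp.shrink (ho1.inter ho3) ⟨hx1, hx2⟩
  obtain ⟨Vp, hVpo, hpVp, hVpcl⟩ := HExp.shrink (ho2.inter ho5) ⟨hp1, hp2⟩
  obtain ⟨Vq, hVqo, hqVq, hVqcl⟩ := HExp.shrink (ho4.inter ho6) ⟨hq1, hq2⟩
  have hdUp : Disjoint (closure U) (closure Vp) :=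
    hd1.mono (hUcl.trans inter_subset_left) (hVpcl.trans inter_subset_left)
  have hdUq : Disjoint (closure U) (closure Vq) :=
    hd2.mono (hUcl.trans inter_subset_right) (hVqcl.trans inter_subset_left)
  have hdpq : Disjoint (closure Vp) (closure Vq) :=
    hd3.mono (hVpcl.trans inter_subset_right) (hVqcl.trans inter_subset_right)
  -- the open trap
  set 𝒲 : Set (HExp M) := {S | S.1 ⊆ U} ∪
    ({S | (S.1 ∩ Vp).Nonempty} ∩ {S | (S.1 ∩ Vq).Nonempty}) with h𝒲
  have h𝒲o : IsOpen 𝒲 :=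
    (HExp.isOpen_miss hUo).union ((HExp.isOpen_hit hVpo).inter (HExp.isOpen_hit hVqo))
  have hC𝒲 : C.1 ⊆ 𝒲 := by
    intro A hA
    rcases hclass A hA with h | h
    · exact Or.inl (h.trans (singleton_subset_iff.2 hxU))
    · exact Or.inr ⟨⟨p, h p (Ne.symm hxp), hpVp⟩, ⟨q, h q (Ne.symm hxq), hqVq⟩⟩
  obtain ⟨D, hD𝒩, hDΦ⟩ :=
    mem_closure_iff.1 hCcl {D : HExp (HExp M) | D.1 ⊆ 𝒲} (HExp.isOpen_miss h𝒲o) hC𝒲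
  obtain ⟨hDchain, hDmax⟩ := hDΦ
  have hD𝒲 : D.1 ⊆ 𝒲 := hD𝒩
  -- no maximal chain lies in the trap
  have hpU : p ∉ U :=
    fun h => Set.disjoint_left.1 hdUp (subset_closure h) (subset_closure hpVp)
  have htop : (⟨univ, isClosed_univ⟩ : HExp M) ∈ D.1 :=
    hDmax _ fun A _ => Or.inr (subset_univ _)
  set 𝒰 : Set (HExp M) := {S | S ∈ D.1 ∧ ¬S.1 ⊆ U} with h𝒰
  haveI h𝒰ne : Nonempty ↥𝒰 :=
    ⟨⟨⟨univ, isClosed_univ⟩, htop, fun h => hpU (h (mem_univ p))⟩⟩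
  have hhit : ∀ S : ↥𝒰, (S.1.1 ∩ closure Vp).Nonempty := by
    intro S
    rcases hD𝒲 S.2.1 with h | h
    · exact absurd h S.2.2
    · exact h.1.mono (inter_subset_inter_right _ subset_closure)
  have hBne : (⋂ S : ↥𝒰, (S.1.1 ∩ closure Vp)).Nonempty := by
    refine IsCompact.nonempty_iInter_of_directed_nonempty_isCompact_isClosed _ ?_ hhit
      (fun S => S.1.2.isCompact.inter_right isClosed_closure)
      (fun S => S.1.2.inter isClosed_closure)
    intro S T
    rcases hDchain S.1 S.2.1 T.1 T.2.1 with h | h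
    · exact ⟨S, subset_rfl, inter_subset_inter_left _ h⟩
    · exact ⟨T, inter_subset_inter_left _ h, subset_rfl⟩
  obtain ⟨b₁, hb₁⟩ := hBne
  have hb₁Vp : b₁ ∈ closure Vp := (mem_iInter.1 hb₁ (Classical.arbitrary ↥𝒰)).2
  have hb₁S : ∀ S : ↥𝒰, b₁ ∈ S.1.1 := fun S => (mem_iInter.1 hb₁ S).1
  set small : Set M := {a : M | ∃ S : HExp M, S ∈ D.1 ∧ S.1 ⊆ U ∧ a ∈ S.1} with hsmall
  have hsmallU : small ⊆ U := by rintro a ⟨S, _, hSU, haS⟩; exact hSU haS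
  set F : HExp M := ⟨closure small ∪ {b₁}, isClosed_closure.union isClosed_singleton⟩ with hF
  have hFcomp : ∀ A ∈ D.1, F.1 ⊆ A.1 ∨ A.1 ⊆ F.1 := by
    intro A hA
    by_cases hAU : A.1 ⊆ U
    · refine Or.inr fun a ha => Or.inl (subset_closure ⟨A, hA, hAU, ha⟩)
    · refine Or.inl ?_
      have hsm : small ⊆ A.1 := by
        rintro a ⟨T, hT, hTU, haT⟩
        rcases hDchain T hT A hA with h | h
        · exact h haT
        · exact absurd (h.trans hTU) hAU
      refine union_subset (closure_minimal hsm A.2) (singleton_subset_iff.2 ?_)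
      exact hb₁S ⟨A, hA, hAU⟩
  have hFmem : F ∈ D.1 := hDmax F hFcomp
  rcases hD𝒲 hFmem with h | h
  · exact Set.disjoint_left.1 hdUp (subset_closure (h (Or.inr rfl))) hb₁Vp
  · obtain ⟨w, hwF, hwVq⟩ := h.2
    rcases hwF with hw | hw
    · exact Set.disjoint_left.1 hdUq (closure_mono hsmallU hw) (subset_closure hwVq)
    · have hwb : w = b₁ := hw
      exact Set.disjoint_left.1 hdpq (hwb ▸ hb₁Vp) (subset_closure hwVq)
end

section
/- Let G be a topological group acting continuously and 3-transitively on a compact Hausdorff space K. Then K is not a universal minimal compact G-space; that is, it is not the case that K is minimal and admits a G-map to every nonempty compact Hausdorff G-space. -/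
universe u v

open Set Pointwise TopologicalSpace

/-- Nonempty closed subsets of `X`. -/
def NEC (X : Type*) [TopologicalSpace X] : Type _ :=
  {A : Set X // IsClosed A ∧ A.Nonempty}

namespace NEC

variable {X : Type*} [TopologicalSpace X]

instance instPO : PartialOrder (NEC X) :=
  PartialOrder.lift (fun A : NEC X => A.1) Subtype.val_injective

lemma le_iff {A B : NEC X} : A ≤ B ↔ A.1 ⊆ B.1 := Iff.rfl

@[ext] lemma ext {A B : NEC X} (h : A.1 = B.1) : A = B := Subtype.ext h

/-- Subbasic open set: closed sets contained in `U`. -/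
def below (U : Set X) : Set (NEC X) := {A | A.1 ⊆ U}

/-- Subbasic open set: closed sets meeting `U`. -/
def hits (U : Set X) : Set (NEC X) := {A | (A.1 ∩ U).Nonempty}

/-- The subbasis for the Vietoris topology. -/
def vSub (X : Type*) [TopologicalSpace X] : Set (Set (NEC X)) :=
  {s | ∃ U : Set X, IsOpen U ∧ (s = below U ∨ s = hits U)}

instance instTopo : TopologicalSpace (NEC X) := generateFrom (vSub X)

lemma isOpen_below {U : Set X} (hU : IsOpen U) : IsOpen (below (X := X) U) :=
  TopologicalSpace.GenerateOpen.basic _ ⟨U, hU, Or.inl rfl⟩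

lemma isOpen_hits {U : Set X} (hU : IsOpen U) : IsOpen (hits (X := X) U) :=
  TopologicalSpace.GenerateOpen.basic _ ⟨U, hU, Or.inr rfl⟩

/-- Compactness of the Vietoris hyperspace. -/
instance instCompact [CompactSpace X] : CompactSpace (NEC X) := by
  rw [← isCompact_univ_iff, isCompact_iff_ultrafilter_le_nhds]
  intro f _
  classical
  set L : Set X := {x : X | ∀ U : Set X, IsOpen U → x ∈ U → hits U ∈ f} with hLdef
  have hcompl : ∀ x : X, x ∉ L → ∃ U : Set X, IsOpen U ∧ x ∈ U ∧ hits U ∉ f := by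
    intro x hx
    simp only [hLdef, mem_setOf_eq, not_forall] at hx
    obtain ⟨U, h1, h2, h3⟩ := hx
    exact ⟨U, h1, h2, h3⟩
  have hLclosed : IsClosed L := by
    rw [← isOpen_compl_iff, isOpen_iff_forall_mem_open]
    intro x hx
    obtain ⟨U, hUopen, hxU, hUf⟩ := hcompl x hx
    refine ⟨U, fun x' hx' hx'L => hUf (hx'L U hUopen hx'), hUopen, hxU⟩
  -- a key finite-intersection fact
  have key : ∀ (Z : Set X), IsClosed Z → (∀ x ∈ Z, x ∉ L) →
      {A : NEC X | A.1 ∩ Z = ∅} ∈ f := by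
    intro Z hZcl hZL
    choose U hUopen hxU hUf using fun x (hx : x ∈ Z) => hcompl x (hZL x hx)
    obtain ⟨t, ht⟩ := hZcl.isCompact.elim_nhds_subcover'
      (fun x hx => U x hx) (fun x hx => (hUopen x hx).mem_nhds (hxU x hx))
    have hmem : (⋂ x ∈ t, {A : NEC X | A.1 ∩ U x.1 x.2 = ∅}) ∈ f := by
      refine (Filter.biInter_finset_mem t).2 fun x _ => ?_
      have := (f.compl_mem_iff_notMem).2 (hUf x.1 x.2)
      rw [Ultrafilter.mem_coe]
      convert this using 1
      ext A
      simp [hits, Set.not_nonempty_iff_eq_empty]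
    refine f.sets_of_superset hmem ?_
    intro A hA
    simp only [mem_iInter, mem_setOf_eq] at hA ⊢
    by_contra hne
    rw [← Ne, ← Set.nonempty_iff_ne_empty] at hne
    obtain ⟨p, hpA, hpZ⟩ := hne
    have hp' := ht hpZ
    simp only [Set.mem_iUnion, exists_prop] at hp'
    obtain ⟨x, hxt, hpU⟩ := hp'
    exact absurd (hA x hxt) (by rw [← Ne, ← Set.nonempty_iff_ne_empty]; exact ⟨p, hpA, hpU⟩)
  -- L is nonempty
  have hLne : L.Nonempty := by
    by_contra hLe
    rw [Set.not_nonempty_iff_eq_empty] at hLe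
    have h1 := key Set.univ isClosed_univ (by simp [hLe])
    have h2 : {A : NEC X | A.1 ∩ Set.univ = ∅} = (∅ : Set (NEC X)) := by
      ext A
      simp only [Set.inter_univ, mem_setOf_eq, Set.mem_empty_iff_false, iff_false]
      exact Set.nonempty_iff_ne_empty.mp A.2.2
    rw [h2] at h1
    exact f.empty_notMem h1
  refine ⟨⟨L, hLclosed, hLne⟩, trivial, ?_⟩
  -- convergence
  refine le_of_le_of_eq (b := ⨅ s ∈ {s | (⟨L, hLclosed, hLne⟩ : NEC X) ∈ s ∧ s ∈ vSub X}, Filter.principal s) ?_ nhds_generateFrom.symm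
  refine le_iInf fun s => le_iInf fun hs => Filter.le_principal_iff.2 ?_
  obtain ⟨hmem, U, hUopen, hU | hU⟩ := hs
  · -- s = below U
    subst hU
    have hZ : ∀ x ∈ Uᶜ, x ∉ L := by
      intro x hx hxL
      exact hx (hmem hxL)
    refine f.sets_of_superset (key Uᶜ (isOpen_compl_iff.1 (by simpa using hUopen)) hZ) ?_
    intro A hA
    simp only [mem_setOf_eq] at hA
    intro a ha
    by_contra haU
    exact absurd hA (by rw [← Ne, ← Set.nonempty_iff_ne_empty]; exact ⟨a, ha, haU⟩)
  · -- s = hits U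
    subst hU
    obtain ⟨x, hxL, hxU⟩ := hmem
    exact hxL U hUopen hxU


/-- Separation helper. -/
lemma sep_aux [CompactSpace X] [T2Space X] {A B : NEC X} (h : ¬ A.1 ⊆ B.1) :
    ∃ u v : Set (NEC X), IsOpen u ∧ IsOpen v ∧ A ∈ u ∧ B ∈ v ∧ Disjoint u v := by
  obtain ⟨a, haA, haB⟩ := Set.not_subset.1 h
  obtain ⟨U, O, hUopen, hOopen, haU, hBO, hdis⟩ :=
    SeparatedNhds.of_isCompact_isCompact (isCompact_singleton (x := a))
      (B.2.1.isCompact) (by simpa using haB)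
  refine ⟨hits U, below O, isOpen_hits hUopen, isOpen_below hOopen,
    ⟨a, haA, haU (mem_singleton a)⟩, hBO, ?_⟩
  rw [Set.disjoint_left]
  rintro C ⟨p, hpC, hpU⟩ hCO
  exact (Set.disjoint_left.1 hdis hpU) (hCO hpC)

instance instT2 [CompactSpace X] [T2Space X] : T2Space (NEC X) := by
  constructor
  intro A B hne
  have : ¬ A.1 ⊆ B.1 ∨ ¬ B.1 ⊆ A.1 := by
    by_contra h
    push_neg at h
    exact hne (ext (le_antisymm ((le_iff).2 h.1) ((le_iff).2 h.2)))
  rcases this with h | h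
  · exact sep_aux h
  · obtain ⟨u, v, hu, hv, hBu, hAv, hd⟩ := sep_aux h
    exact ⟨v, u, hv, hu, hAv, hBu, hd.symm⟩

section Action

variable {G : Type*} [Group G] [TopologicalSpace G] [MulAction G X] [ContinuousSMul G X]
variable [T2Space X]

noncomputable instance instMA : MulAction G (NEC X) where
  smul g A := ⟨g • A.1, A.2.1.smul g, A.2.2.smul_set⟩
  one_smul A := ext (one_smul G A.1)
  mul_smul g h A := ext (mul_smul g h A.1)

lemma smul_val (g : G) (A : NEC X) : (g • A).1 = g • A.1 := rfl

lemma smul_le_smul_iff {g : G} {A B : NEC X} : g • A ≤ g • B ↔ A ≤ B := by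
  rw [le_iff, le_iff, smul_val, smul_val]
  exact Set.smul_set_subset_smul_set_iff

instance instCS [CompactSpace X] : ContinuousSMul G (NEC X) := by
  constructor
  refine continuous_generateFrom_iff.mpr ?_
  rintro s ⟨U, hUopen, hU | hU⟩ <;> subst hU <;>
    rw [isOpen_iff_forall_mem_open]
  · -- below U
    rintro ⟨g₀, A₀⟩ hmem
    have hΩ : IsOpen {q : G × X | q.1 • q.2 ∈ U} := (hUopen.preimage continuous_smul)
    have hsub : {g₀} ×ˢ A₀.1 ⊆ {q : G × X | q.1 • q.2 ∈ U} := by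
      rintro ⟨g, a⟩ ⟨hg, ha⟩
      simp only [mem_singleton_iff] at hg
      subst hg
      exact hmem (Set.smul_mem_smul_set ha)
    obtain ⟨n, m, hn, hm, hgn, hAm, hnm⟩ :=
      generalized_tube_lemma isCompact_singleton A₀.2.1.isCompact hΩ hsub
    refine ⟨n ×ˢ below m, ?_, hn.prod (isOpen_below hm), ⟨hgn rfl, hAm⟩⟩
    rintro ⟨g, A⟩ ⟨hg, hA⟩
    rintro x hx
    obtain ⟨a, ha, rfl⟩ := hx
    exact hnm (Set.mk_mem_prod hg (hA ha))
  · -- hits U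
    rintro ⟨g₀, A₀⟩ hmem
    obtain ⟨x, hxval, hxU⟩ := hmem
    obtain ⟨a₀, ha₀, rfl⟩ := hxval
    have hΩ : IsOpen {q : G × X | q.1 • q.2 ∈ U} := (hUopen.preimage continuous_smul)
    obtain ⟨n, m, hn, hm, hgn, ham, hnm⟩ := isOpen_prod_iff.1 hΩ g₀ a₀ hxU
    refine ⟨n ×ˢ hits m, ?_, hn.prod (isOpen_hits hm), ⟨hgn, ⟨a₀, ha₀, ham⟩⟩⟩
    rintro ⟨g, A⟩ ⟨hg, a, haA, ham'⟩
    exact ⟨g • a, Set.smul_mem_smul_set haA, hnm (Set.mk_mem_prod hg ham')⟩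

end Action

section Chains

variable [CompactSpace X] [T2Space X]

lemma ptsep {A B : NEC X} (h : ¬ A.1 ⊆ B.1) :
    ∃ U O : Set X, IsOpen U ∧ IsOpen O ∧ (A.1 ∩ U).Nonempty ∧ B.1 ⊆ O ∧ Disjoint U O := by
  obtain ⟨a, haA, haB⟩ := Set.not_subset.1 h
  obtain ⟨U, O, hUopen, hOopen, haU, hBO, hdis⟩ :=
    SeparatedNhds.of_isCompact_isCompact (isCompact_singleton (x := a))
      (B.2.1.isCompact) (by simpa using haB)
  exact ⟨U, O, hUopen, hOopen, ⟨a, haA, haU (mem_singleton a)⟩, hBO, hdis⟩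

/-- The set of (closed) chains, as a subset of the double hyperspace. -/
def chains (X : Type*) [TopologicalSpace X] : Set (NEC (NEC X)) :=
  {c | IsChain (· ≤ ·) c.1}

lemma isClosed_chains : IsClosed (chains X) := by
  rw [← isOpen_compl_iff, isOpen_iff_forall_mem_open]
  intro c hc
  simp only [chains, mem_compl_iff, mem_setOf_eq, IsChain, Set.Pairwise, not_forall] at hc
  obtain ⟨A, hA, B, hB, hAB, hcomp⟩ := hc
  push_neg at hcomp
  obtain ⟨h1, h2⟩ := hcomp
  rw [le_iff] at h1 h2
  obtain ⟨U1, O1, hU1, hO1, hAU1, hBO1, hd1⟩ := ptsep h1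
  obtain ⟨U2, O2, hU2, hO2, hBU2, hAO2, hd2⟩ := ptsep h2
  refine ⟨hits (hits U1 ∩ below O2) ∩ hits (hits U2 ∩ below O1), ?_,
    (isOpen_hits ((isOpen_hits hU1).inter (isOpen_below hO2))).inter
      (isOpen_hits ((isOpen_hits hU2).inter (isOpen_below hO1))),
    ⟨⟨A, hA, hAU1, hAO2⟩, ⟨B, hB, hBU2, hBO1⟩⟩⟩
  rintro c' ⟨⟨A', hA'c, hA'U1, hA'O2⟩, ⟨B', hB'c, hB'U2, hB'O1⟩⟩
  simp only [chains, mem_compl_iff, mem_setOf_eq]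
  intro hchain
  obtain ⟨p, hpA', hpU1⟩ := hA'U1
  obtain ⟨q, hqB', hqU2⟩ := hB'U2
  have hne : A' ≠ B' := by
    rintro rfl
    exact Set.disjoint_left.1 hd1 hpU1 (hB'O1 hpA')
  rcases hchain hA'c hB'c hne with h | h
  · exact Set.disjoint_left.1 hd1 hpU1 (hB'O1 (le_iff.1 h hpA'))
  · exact Set.disjoint_left.1 hd2 hqU2 (hA'O2 (le_iff.1 h hqB'))

lemma mem_of_forall_comparable {c : Set (NEC X)} (hmax : IsMaxChain (· ≤ ·) c)
    (D : NEC X) (hD : ∀ C ∈ c, C ≤ D ∨ D ≤ C) : D ∈ c := by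
  have h := hmax.2 (hmax.isChain.insert fun b hb _ => (hD b hb).symm)
    (Set.subset_insert _ _)
  rw [h]
  exact Set.mem_insert _ _

lemma isClosed_of_maxChain {c : Set (NEC X)} (hmax : IsMaxChain (· ≤ ·) c) :
    IsClosed c := by
  rw [← isOpen_compl_iff, isOpen_iff_forall_mem_open]
  intro A hA
  have hB : ∃ B ∈ c, ¬ A ≤ B ∧ ¬ B ≤ A := by
    by_contra h
    refine hA (mem_of_forall_comparable hmax A fun C hC => ?_)
    by_contra h2
    push_neg at h2
    exact h ⟨C, hC, h2.2, h2.1⟩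
  obtain ⟨B, hBc, h1, h2⟩ := hB
  rw [le_iff] at h1 h2
  obtain ⟨U1, O1, hU1, hO1, hAU1, hBO1, hd1⟩ := ptsep h1
  obtain ⟨U2, O2, hU2, hO2, hBU2, hAO2, hd2⟩ := ptsep h2
  refine ⟨hits U1 ∩ below O2, ?_, (isOpen_hits hU1).inter (isOpen_below hO2),
    hAU1, hAO2⟩
  rintro A' ⟨hA'U1, hA'O2⟩ hA'c
  obtain ⟨p, hpA', hpU1⟩ := hA'U1
  obtain ⟨q, hqB, hqU2⟩ := hBU2
  have hne : A' ≠ B := by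
    rintro rfl
    exact Set.disjoint_left.1 hd1 hpU1 (hBO1 hpA')
  rcases hmax.isChain hA'c hBc hne with h | h
  · exact Set.disjoint_left.1 hd1 hpU1 (hBO1 (le_iff.1 h hpA'))
  · exact Set.disjoint_left.1 hd2 hqU2 (hA'O2 (le_iff.1 h hqB))

/-- Key combinatorial lemma: a maximal chain cannot consist only of sets
that are contained in `U` or meet both `V` and `W`, when `U, V, W` have
pairwise disjoint closures and `V, W` are nonempty. -/
lemma maxChain_struct {U V W : Set X} (hUo : IsOpen U) (hVo : IsOpen V)
    (hWo : IsOpen W) {y z : X} (hyV : y ∈ V) (hzW : z ∈ W)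
    (hUV : Disjoint (closure U) (closure V))
    (hUW : Disjoint (closure U) (closure W))
    (hVW : Disjoint (closure V) (closure W))
    {c : Set (NEC X)} (hmax : IsMaxChain (· ≤ ·) c)
    (H : ∀ A ∈ c, A.1 ⊆ U ∨ ((A.1 ∩ V).Nonempty ∧ (A.1 ∩ W).Nonempty)) :
    False := by
  classical
  set bigs : Set (NEC X) := {A | A ∈ c ∧ (A.1 ∩ V).Nonempty ∧ (A.1 ∩ W).Nonempty}
    with hbigs
  -- the top element
  have htop : (⟨Set.univ, isClosed_univ, ⟨y, trivial⟩⟩ : NEC X) ∈ bigs := by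
    refine ⟨mem_of_forall_comparable hmax _ fun C hC => Or.inl fun p _ => trivial, ?_, ?_⟩
    · exact ⟨y, trivial, hyV⟩
    · exact ⟨z, trivial, hzW⟩
  haveI : Nonempty bigs := ⟨⟨_, htop⟩⟩
  -- the intersection of all big elements
  set D : Set X := ⋂ A : bigs, (A : NEC X).1 with hD
  have hDclosed : IsClosed D := isClosed_iInter fun A => (A : NEC X).2.1
  have hdir : ∀ s : Set X, IsClosed s →
      Directed (· ⊇ ·) fun A : bigs => (A : NEC X).1 ∩ s := by
    intro s hs A B
    rcases Classical.em ((A : NEC X) = (B : NEC X)) with h | h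
    · obtain rfl : A = B := Subtype.ext h
      exact ⟨A, Set.Subset.rfl, Set.Subset.rfl⟩
    · rcases hmax.isChain A.2.1 B.2.1 h with hle | hle
      · exact ⟨A, Set.Subset.rfl, Set.inter_subset_inter_left s (le_iff.1 hle)⟩
      · exact ⟨B, Set.inter_subset_inter_left s (le_iff.1 hle), Set.Subset.rfl⟩
  have hinter : ∀ s : Set X, IsClosed s → s.Nonempty →
      (∀ A ∈ bigs, (A.1 ∩ s).Nonempty) → (D ∩ s).Nonempty := by
    intro s hs hsne hall
    have := IsCompact.nonempty_iInter_of_directed_nonempty_isCompact_isClosed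
      (fun A : bigs => (A : NEC X).1 ∩ s) (hdir s hs)
      (fun A => hall _ A.2)
      (fun A => ((A : NEC X).2.1.inter hs).isCompact)
      (fun A => (A : NEC X).2.1.inter hs)
    rwa [← Set.iInter_inter, ← hD] at this
  have hDV : (D ∩ closure V).Nonempty := by
    refine hinter _ isClosed_closure ⟨y, subset_closure hyV⟩ fun A hA => ?_
    exact hA.2.1.mono (Set.inter_subset_inter_right _ subset_closure)
  have hDW : (D ∩ closure W).Nonempty := by
    refine hinter _ isClosed_closure ⟨z, subset_closure hzW⟩ fun A hA => ?_
    exact hA.2.2.mono (Set.inter_subset_inter_right _ subset_closure)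
  have hDne : D.Nonempty := hDV.mono (Set.inter_subset_left)
  set Dpt : NEC X := ⟨D, hDclosed, hDne⟩ with hDpt
  have hD_le : ∀ A ∈ bigs, Dpt ≤ A := fun A hA => le_iff.2 (Set.iInter_subset _ (⟨A, hA⟩ : bigs))
  have hDmem : Dpt ∈ c := by
    refine mem_of_forall_comparable hmax _ fun C hC => ?_
    rcases Classical.em (C ∈ bigs) with h | h
    · exact Or.inr (hD_le C h)
    · refine Or.inl (le_iff.2 (Set.subset_iInter fun A => ?_))
      have hne : C ≠ (A : NEC X) := by
        rintro rfl
        exact h A.2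
      rcases hmax.isChain hC A.2.1 hne with hle | hle
      · exact le_iff.1 hle
      · exact absurd ⟨hC, A.2.2.1.mono (Set.inter_subset_inter_left _ (le_iff.1 hle)),
          A.2.2.2.mono (Set.inter_subset_inter_left _ (le_iff.1 hle))⟩ h
  have hDbig : Dpt ∈ bigs := by
    rcases H Dpt hDmem with h | h
    · obtain ⟨p, hpD, hpV⟩ := hDV
      exact absurd (subset_closure (h hpD)) fun hq => Set.disjoint_left.1 hUV hq hpV
    · exact ⟨hDmem, h⟩
  -- small elements
  set smalls : Set (NEC X) := {A | A ∈ c ∧ A ∉ bigs} with hsmalls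
  have hsmall_le : ∀ A ∈ smalls, A.1 ⊆ D := by
    intro A hA
    have hne : A ≠ Dpt := by
      rintro rfl
      exact hA.2 hDbig
    rcases hmax.isChain hA.1 hDmem hne with hle | hle
    · exact le_iff.1 hle
    · exact absurd ⟨hA.1, hDbig.2.1.mono (Set.inter_subset_inter_left _ (le_iff.1 hle)),
        hDbig.2.2.mono (Set.inter_subset_inter_left _ (le_iff.1 hle))⟩ hA.2
  rcases Classical.em (smalls.Nonempty) with hsne | hsne
  · -- the union of the small elements
    obtain ⟨A₀, hA₀⟩ := hsne
    set E : Set X := closure (⋃ A : smalls, (A : NEC X).1) with hE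
    have hEne : E.Nonempty := by
      obtain ⟨p, hp⟩ := (A₀ : NEC X).2.2
      exact ⟨p, subset_closure (Set.mem_iUnion.2 ⟨⟨A₀, hA₀⟩, hp⟩)⟩
    set Ept : NEC X := ⟨E, isClosed_closure, hEne⟩ with hEpt
    have hUnionD : (⋃ A : smalls, (A : NEC X).1) ⊆ D :=
      Set.iUnion_subset fun A => hsmall_le _ A.2
    have hED : E ⊆ D := closure_minimal hUnionD hDclosed
    have hsmall_le_E : ∀ A ∈ smalls, A.1 ⊆ E := fun A hA =>
      (Set.subset_iUnion (fun B : smalls => (B : NEC X).1) ⟨A, hA⟩).trans subset_closure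
    have hEmem : Ept ∈ c := by
      refine mem_of_forall_comparable hmax _ fun C hC => ?_
      rcases Classical.em (C ∈ bigs) with h | h
      · refine Or.inr (le_iff.2 (closure_minimal (Set.iUnion_subset fun A => ?_) C.2.1))
        have hne : (A : NEC X) ≠ C := by
          rintro rfl
          exact A.2.2 h
        rcases hmax.isChain A.2.1 hC hne with hle | hle
        · exact le_iff.1 hle
        · exact absurd ⟨A.2.1, h.2.1.mono (Set.inter_subset_inter_left _ (le_iff.1 hle)),
            h.2.2.mono (Set.inter_subset_inter_left _ (le_iff.1 hle))⟩ A.2.2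
      · exact Or.inl (le_iff.2 (hsmall_le_E C ⟨hC, h⟩))
    rcases H Ept hEmem with hEU | hEbig
    · -- E ⊆ U : consider E ∪ (D ∩ closure W)
      have hDWne := hDW
      set F : Set X := E ∪ (D ∩ closure W) with hF
      have hFne : F.Nonempty := hEne.mono Set.subset_union_left
      set Fpt : NEC X := ⟨F, isClosed_closure.union (hDclosed.inter isClosed_closure),
        hFne⟩ with hFpt
      have hFmem : Fpt ∈ c := by
        refine mem_of_forall_comparable hmax _ fun C hC => ?_
        rcases Classical.em (C ∈ bigs) with h | h
        · refine Or.inr (le_iff.2 ?_)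
          exact Set.union_subset (hED.trans (le_iff.1 (hD_le C h)))
            ((Set.inter_subset_left).trans (le_iff.1 (hD_le C h)))
        · exact Or.inl (le_iff.2 ((hsmall_le_E C ⟨hC, h⟩).trans Set.subset_union_left))
      rcases H Fpt hFmem with h | h
      · obtain ⟨w, hwD, hwW⟩ := hDWne
        exact Set.disjoint_left.1 hUW (subset_closure (h (Or.inr ⟨hwD, hwW⟩))) hwW
      · obtain ⟨v, hvF, hvV⟩ := h.1
        rcases hvF with hvE | ⟨_, hvW⟩
        · exact Set.disjoint_left.1 hUV (subset_closure (hEU hvE)) (subset_closure hvV)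
        · exact Set.disjoint_left.1 hVW (subset_closure hvV) hvW
    · -- E is big: derive a contradiction
      have hcases : (⋃ A : smalls, (A : NEC X).1) ∩ V = ∅ ∨
          (⋃ A : smalls, (A : NEC X).1) ∩ W = ∅ := by
        by_contra h
        push_neg at h
        obtain ⟨h1, h2⟩ := h
        obtain ⟨p, hpU, hpV⟩ := h1
        obtain ⟨q, hqU, hqW⟩ := h2
        obtain ⟨A, hpA⟩ := Set.mem_iUnion.1 hpU
        obtain ⟨B, hqB⟩ := Set.mem_iUnion.1 hqU
        have hAnW : (A : NEC X).1 ∩ W = ∅ := by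
          by_contra hAW
          rw [← Ne, ← Set.nonempty_iff_ne_empty] at hAW
          exact A.2.2 ⟨A.2.1, ⟨p, hpA, hpV⟩, hAW⟩
        have hBnV : (B : NEC X).1 ∩ V = ∅ := by
          by_contra hBV
          rw [← Ne, ← Set.nonempty_iff_ne_empty] at hBV
          exact B.2.2 ⟨B.2.1, hBV, ⟨q, hqB, hqW⟩⟩
        have hne : (A : NEC X) ≠ (B : NEC X) := by
          intro hAB
          have : p ∈ (B : NEC X).1 ∩ V := ⟨hAB ▸ hpA, hpV⟩
          rw [hBnV] at this
          exact this
        rcases hmax.isChain A.2.1 B.2.1 hne with hle | hle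
        · have : p ∈ (B : NEC X).1 ∩ V := ⟨le_iff.1 hle hpA, hpV⟩
          rw [hBnV] at this
          exact this
        · have : q ∈ (A : NEC X).1 ∩ W := ⟨le_iff.1 hle hqB, hqW⟩
          rw [hAnW] at this
          exact this
      rcases hcases with h | h
      · have hEV : E ⊆ Vᶜ := by
          refine closure_minimal ?_ (isClosed_compl_iff.2 hVo)
          intro p hp hpV
          have : p ∈ (⋃ A : smalls, (A : NEC X).1) ∩ V := ⟨hp, hpV⟩
          rw [h] at this
          exact this
        obtain ⟨v, hvE, hvV⟩ := hEbig.1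
        exact hEV hvE hvV
      · have hEW : E ⊆ Wᶜ := by
          refine closure_minimal ?_ (isClosed_compl_iff.2 hWo)
          intro p hp hpW
          have : p ∈ (⋃ A : smalls, (A : NEC X).1) ∩ W := ⟨hp, hpW⟩
          rw [h] at this
          exact this
        obtain ⟨w, hwE, hwW⟩ := hEbig.2
        exact hEW hwE hwW
  · -- no small elements: every element of c is big, so D is the minimum
    obtain ⟨v, hvD, hvV⟩ := hDbig.2.1
    have hvmem : (⟨{v}, isClosed_singleton, Set.singleton_nonempty v⟩ : NEC X) ∈ c := by
      refine mem_of_forall_comparable hmax _ fun C hC => ?_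
      have hCbig : C ∈ bigs := by
        by_contra h
        exact hsne ⟨C, hC, h⟩
      refine Or.inr (le_iff.2 ?_)
      intro p hp
      rw [Set.mem_singleton_iff] at hp
      subst hp
      exact le_iff.1 (hD_le C hCbig) hvD
    rcases H _ hvmem with h | h
    · exact Set.disjoint_left.1 hUV (subset_closure (h rfl)) (subset_closure hvV)
    · obtain ⟨w, hwv, hwW⟩ := h.2
      rw [Set.mem_singleton_iff] at hwv
      subst hwv
      exact Set.disjoint_left.1 hVW (subset_closure hvV) (subset_closure hwW)

end Chains

section MaxChainSmul

variable {G : Type*} [Group G] [TopologicalSpace G] [MulAction G X] [ContinuousSMul G X]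
variable [T2Space X]

lemma isMaxChain_smul (g : G) {c : Set (NEC X)} (h : IsMaxChain (· ≤ ·) c) :
    IsMaxChain (· ≤ ·) ((fun A : NEC X => g • A) '' c) := by
  exact IsMaxChain.image
    ({ toEquiv := MulAction.toPerm g, map_rel_iff' := @fun A B => smul_le_smul_iff } :
      ((· ≤ ·) : NEC X → NEC X → Prop) ≃r ((· ≤ ·) : NEC X → NEC X → Prop)) h

lemma smul_mem_chains [CompactSpace X] {g : G} {p : NEC (NEC X)}
    (hp : p ∈ chains X) : g • p ∈ chains X := by
  have hval : (g • p).1 = (fun A : NEC X => g • A) '' p.1 := by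
    rw [smul_val, ← Set.image_smul]
  simp only [chains, mem_setOf_eq, hval]
  exact hp.image_of_map_rel _ _ _ fun a b hab => smul_le_smul_iff.2 hab

end MaxChainSmul

end NEC

lemma shrink_open {K : Type*} [TopologicalSpace K] [CompactSpace K] [T2Space K]
    {p : K} {S : Set K} (hS : IsOpen S) (hp : p ∈ S) :
    ∃ T : Set K, IsOpen T ∧ p ∈ T ∧ closure T ⊆ S := by
  obtain ⟨t, htn, htc, hts⟩ := exists_mem_nhds_isClosed_subset (hS.mem_nhds hp)
  exact ⟨interior t, isOpen_interior, mem_interior_iff_mem_nhds.2 htn,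
    (closure_minimal interior_subset htc).trans hts⟩

lemma triple_sep {K : Type*} [TopologicalSpace K] [CompactSpace K] [T2Space K]
    {x y z : K} (hxy : x ≠ y) (hxz : x ≠ z) (hyz : y ≠ z) :
    ∃ U V W : Set K, IsOpen U ∧ IsOpen V ∧ IsOpen W ∧ x ∈ U ∧ y ∈ V ∧ z ∈ W ∧
      Disjoint (closure U) (closure V) ∧ Disjoint (closure U) (closure W) ∧
      Disjoint (closure V) (closure W) := by
  obtain ⟨u1, v1, hu1, hv1, hxu1, hyv1, hd1⟩ := t2_separation hxy
  obtain ⟨u2, v2, hu2, hv2, hxu2, hzv2, hd2⟩ := t2_separation hxz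
  obtain ⟨u3, v3, hu3, hv3, hyu3, hzv3, hd3⟩ := t2_separation hyz
  obtain ⟨U, hUo, hxU, hUc⟩ := shrink_open (hu1.inter hu2) ⟨hxu1, hxu2⟩
  obtain ⟨V, hVo, hyV, hVc⟩ := shrink_open (hv1.inter hu3) ⟨hyv1, hyu3⟩
  obtain ⟨W, hWo, hzW, hWc⟩ := shrink_open (hv2.inter hv3) ⟨hzv2, hzv3⟩
  refine ⟨U, V, W, hUo, hVo, hWo, hxU, hyV, hzW, ?_, ?_, ?_⟩
  · exact Set.disjoint_left.2 fun p hpU hpV =>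
      Set.disjoint_left.1 hd1 (hUc hpU).1 (hVc hpV).1
  · exact Set.disjoint_left.2 fun p hpU hpW =>
      Set.disjoint_left.1 hd2 (hUc hpU).2 (hWc hpW).1
  · exact Set.disjoint_left.2 fun p hpV hpW =>
      Set.disjoint_left.1 hd3 (hVc hpV).2 (hWc hpW).2

/-- If a topological group `G` acts continuously and 3-transitively on a compact Hausdorff
space `K`, then `K` is not a universal minimal compact `G`-space. -/
theorem statement1 (G : Type u) [Group G] [TopologicalSpace G] [IsTopologicalGroup G]
    (K : Type v) [TopologicalSpace K] [CompactSpace K] [T2Space K] [Nonempty K]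
    [MulAction G K] [ContinuousSMul G K]
    (h3 : (∃ x y z : K, x ≠ y ∧ x ≠ z ∧ y ≠ z) ∧
      ∀ a₁ a₂ a₃ b₁ b₂ b₃ : K,
        a₁ ≠ a₂ → a₁ ≠ a₃ → a₂ ≠ a₃ → b₁ ≠ b₂ → b₁ ≠ b₃ → b₂ ≠ b₃ →
        ∃ g : G, g • a₁ = b₁ ∧ g • a₂ = b₂ ∧ g • a₃ = b₃) :
    ¬ ((∀ A : Set K, A.Nonempty → IsClosed A →
        (∀ (g : G), ∀ x ∈ A, g • x ∈ A) → A = Set.univ) ∧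
      (∀ (Y : Type v) [TopologicalSpace Y] [CompactSpace Y] [T2Space Y]
        [MulAction G Y] [ContinuousSMul G Y], Nonempty Y →
        ∃ f : K → Y, Continuous f ∧ ∀ (g : G) (x : K), f (g • x) = g • f x)) := by
  rintro ⟨-, huniv⟩
  classical
  obtain ⟨x, y, z, hxy, hxz, hyz⟩ := h3.1
  obtain ⟨U, V, W, hUo, hVo, hWo, hxU, hyV, hzW, hUV, hUW, hVW⟩ :=
    triple_sep hxy hxz hyz
  -- a maximal chain of nonempty closed subsets of K
  set c₀ : Set (NEC K) := maxChain ((· ≤ ·) : NEC K → NEC K → Prop) with hc₀def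
  have hc₀ : IsMaxChain (· ≤ ·) c₀ := maxChain_spec
  have htopmem : (⟨Set.univ, isClosed_univ, ⟨x, trivial⟩⟩ : NEC K) ∈ c₀ :=
    NEC.mem_of_forall_comparable hc₀ _ fun C hC => Or.inl fun p _ => trivial
  set c0pt : NEC (NEC K) := ⟨c₀, NEC.isClosed_of_maxChain hc₀, ⟨_, htopmem⟩⟩ with hc0pt
  -- the orbit closure of the maximal chain
  set orb : Set (NEC (NEC K)) := Set.range (fun g : G => g • c0pt) with horb
  set Ybar : Set (NEC (NEC K)) := closure orb with hYbar
  have hYinv : ∀ (g : G), ∀ p ∈ Ybar, g • p ∈ Ybar := by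
    intro g p hp
    have h1 : g • p ∈ (fun q : NEC (NEC K) => g • q) '' closure orb :=
      ⟨p, hp, rfl⟩
    have himg : (fun q : NEC (NEC K) => g • q) '' closure orb
        = closure ((fun q : NEC (NEC K) => g • q) '' orb) :=
      (Homeomorph.smul (α := NEC (NEC K)) g).image_closure orb
    rw [himg] at h1
    refine closure_mono ?_ h1
    rintro q ⟨-, ⟨g', rfl⟩, rfl⟩
    exact ⟨g * g', by simp [mul_smul]⟩
  -- Ybar as a compact Hausdorff G-space
  haveI hYcs : CompactSpace Ybar :=
    isCompact_iff_compactSpace.1 (isClosed_closure.isCompact)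
  letI : MulAction G Ybar :=
    { smul := fun g p => ⟨g • p.1, hYinv g p.1 p.2⟩
      one_smul := fun p => Subtype.ext (one_smul G p.1)
      mul_smul := fun g h p => Subtype.ext (mul_smul g h p.1) }
  haveI : ContinuousSMul G Ybar := by
    constructor
    refine Continuous.subtype_mk ?_ _
    exact continuous_smul.comp (continuous_fst.prodMk
      (continuous_subtype_val.comp continuous_snd))
  have hYne : Nonempty Ybar := ⟨⟨(1 : G) • c0pt, subset_closure ⟨1, rfl⟩⟩⟩
  -- the universal property gives an equivariant map
  obtain ⟨f, hfc, hfe⟩ := huniv Ybar hYne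
  -- the chain associated to x
  set cx : NEC (NEC K) := (f x).1 with hcx
  have hcxY : cx ∈ Ybar := (f x).2
  -- every element of Ybar is a chain
  have hchains : Ybar ⊆ NEC.chains K := by
    refine closure_minimal ?_ NEC.isClosed_chains
    rintro p ⟨g, rfl⟩
    exact NEC.smul_mem_chains hc₀.isChain
  have hcxchain : IsChain (· ≤ ·) cx.1 := hchains hcxY
  -- stabilizer invariance + 3-transitivity: the key structure of cx
  have hkey : ∀ A ∈ cx.1, ∀ p q : K, p ≠ x → q ≠ x → p ∈ A.1 → q ∈ A.1 := by
    intro A hA p q hpx hqx hpA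
    by_contra hqA
    rcases Classical.em (p = q) with rfl | hpq
    · exact hqA hpA
    obtain ⟨g, hg1, hg2, hg3⟩ := h3.2 x p q x q p
      (Ne.symm hpx) (Ne.symm hqx) hpq (Ne.symm hqx) (Ne.symm hpx) (Ne.symm hpq)
    -- g fixes x, so g fixes cx
    have hfix : cx = g • cx := by
      have h1 : f (g • x) = g • f x := hfe g x
      rw [hg1] at h1
      have h2 := congrArg Subtype.val h1
      exact h2
    have hBmem : g • A ∈ cx.1 := by
      have h4 : ((g • cx : NEC (NEC K))).1 = (fun B : NEC K => g • B) '' cx.1 := by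
        rw [NEC.smul_val, ← Set.image_smul]
      have h5 : cx.1 = (fun B : NEC K => g • B) '' cx.1 := by rw [← h4, ← hfix]
      rw [h5]
      exact ⟨A, hA, rfl⟩
    have hqB : q ∈ (g • A).1 := by
      rw [NEC.smul_val, ← hg2]
      exact Set.smul_mem_smul_set hpA
    have hpB : p ∉ (g • A).1 := by
      rw [NEC.smul_val, Set.mem_smul_set_iff_inv_smul_mem]
      have : g⁻¹ • p = q := by rw [← hg3, inv_smul_smul]
      rw [this]
      exact hqA
    have hne : A ≠ g • A := by
      rintro h
      exact hpB (h ▸ hpA)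
    rcases hcxchain hA hBmem hne with h | h
    · exact hpB (NEC.le_iff.1 h hpA)
    · exact hqA (NEC.le_iff.1 h hqB)
  -- hence every element of cx is {x} or contains everything but x
  set 𝒮 : Set (NEC K) :=
    NEC.below U ∪ (NEC.hits V ∩ NEC.hits W) with h𝒮
  have h𝒮open : IsOpen 𝒮 :=
    (NEC.isOpen_below hUo).union ((NEC.isOpen_hits hVo).inter (NEC.isOpen_hits hWo))
  have hcx𝒮 : cx ∈ NEC.below 𝒮 := by
    intro A hA
    rcases Classical.em (∃ p ∈ A.1, p ≠ x) with ⟨p, hpA, hpx⟩ | h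
    · refine Or.inr ⟨⟨y, hkey A hA p y hpx (Ne.symm hxy) hpA, hyV⟩,
        ⟨z, hkey A hA p z hpx (Ne.symm hxz) hpA, hzW⟩⟩
    · push_neg at h
      refine Or.inl fun p hp => ?_
      rw [h p hp]
      exact hxU
  -- some translate of the maximal chain lies in the open set `below 𝒮`
  have hmem := mem_closure_iff.1 hcxY (NEC.below 𝒮) (NEC.isOpen_below h𝒮open) hcx𝒮
  obtain ⟨pt, hpt𝒮, g, hgpt⟩ := hmem
  have hc₁max : IsMaxChain (· ≤ ·) ((fun A : NEC K => g • A) '' c₀) :=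
    NEC.isMaxChain_smul g hc₀
  have hptval : pt.1 = (fun A : NEC K => g • A) '' c₀ := by
    rw [← hgpt, NEC.smul_val, ← Set.image_smul]
  refine NEC.maxChain_struct hUo hVo hWo hyV hzW hUV hUW hVW hc₁max ?_
  intro A hA
  have : A ∈ 𝒮 := hpt𝒮 (hptval ▸ hA)
  rcases this with h | h
  · exact Or.inl h
  · exact Or.inr ⟨h.1, h.2⟩
end

section
/- Let G be a topological group, let M be a universal minimal compact G-space, let p ∈ M, and let H = {g ∈ G : g·p = p} be the stabilizer of p. Then there exists a chain C (totally ordered by inclusion) of nonempty closed subsets of M which is maximal among all such chains and is H-invariant: for every F ∈ C and every g ∈ H, the image g·F belongs to C. -/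
universe u v

namespace Usp

open TopologicalSpace Set Topology Filter


variable {X : Type*} [TopologicalSpace X]

structure Hyp (X : Type*) [TopologicalSpace X] where
  carrier : Set X
  closed' : IsClosed carrier
  nonempty' : carrier.Nonempty

namespace Hyp

theorem ext' {A B : Hyp X} (h : A.carrier = B.carrier) : A = B := by
  cases A; cases B; simpa using h

instance : PartialOrder (Hyp X) := PartialOrder.lift carrier (fun _ _ => ext')

theorem le_def {A B : Hyp X} : A ≤ B ↔ A.carrier ⊆ B.carrier := Iff.rfl

/-- subbasic open set: closed sets contained in `O` -/
def sub (O : Set X) : Set (Hyp X) := {A | A.carrier ⊆ O}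

/-- subbasic open set: closed sets meeting `O` -/
def hit (O : Set X) : Set (Hyp X) := {A | (A.carrier ∩ O).Nonempty}

def subbasis (X : Type*) [TopologicalSpace X] : Set (Set (Hyp X)) :=
  {s | ∃ O : Set X, IsOpen O ∧ (s = sub O ∨ s = hit O)}

instance instHypTop : TopologicalSpace (Hyp X) := generateFrom (subbasis X)

theorem topology_eq : (instHypTop : TopologicalSpace (Hyp X)) = generateFrom (subbasis X) := rfl

theorem isOpen_sub {O : Set X} (hO : IsOpen O) : IsOpen (sub O) :=
  isOpen_generateFrom_of_mem ⟨O, hO, Or.inl rfl⟩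

theorem isOpen_hit {O : Set X} (hO : IsOpen O) : IsOpen (hit O) :=
  isOpen_generateFrom_of_mem ⟨O, hO, Or.inr rfl⟩

theorem nhds_eq (A : Hyp X) : 𝓝 A = ⨅ s ∈ {s | A ∈ s ∧ s ∈ subbasis X}, Filter.principal s :=
  nhds_generateFrom

theorem le_nhds_iff {f : Filter (Hyp X)} {A : Hyp X} :
    f ≤ 𝓝 A ↔ ∀ s ∈ subbasis X, A ∈ s → s ∈ f := by
  rw [nhds_eq, le_iInf₂_iff]
  constructor
  · intro h s hs hA
    simpa [Filter.le_principal_iff] using h s ⟨hA, hs⟩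
  · intro h s hs
    simpa [Filter.le_principal_iff] using h s hs.2 hs.1

instance [CompactSpace X] : CompactSpace (Hyp X) := by
  rw [← isCompact_univ_iff, isCompact_iff_ultrafilter_le_nhds]
  intro U _
  set K : Set X := {x : X | ∀ V : Set X, IsOpen V → x ∈ V → hit V ∈ U} with hK
  have hKclosed : IsClosed K := by
    rw [← isOpen_compl_iff, isOpen_iff_mem_nhds]
    intro x hx
    simp only [mem_compl_iff, hK, mem_setOf_eq, not_forall] at hx
    obtain ⟨V, hV, hxV, hVU⟩ := hx
    refine Filter.mem_of_superset (hV.mem_nhds hxV) ?_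
    intro y hy hyK
    exact hVU (hyK V hV hy)
  have hKne : K.Nonempty := by
    by_contra hne
    rw [not_nonempty_iff_eq_empty] at hne
    have hcov : ∀ x : X, ∃ V : Set X, IsOpen V ∧ x ∈ V ∧ hit V ∉ U := by
      intro x
      have : x ∉ K := by rw [hne]; exact notMem_empty x
      simp only [hK, mem_setOf_eq, not_forall] at this
      obtain ⟨V, h1, h2, h3⟩ := this
      exact ⟨V, h1, h2, h3⟩
    choose V hVopen hVmem hVU using hcov
    obtain ⟨t, -, ht⟩ := isCompact_univ.elim_nhds_subcover V
      (fun x _ => (hVopen x).mem_nhds (hVmem x))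
    have hmem : (⋂ x ∈ t, (hit (V x))ᶜ) ∈ U := by
      refine (Filter.biInter_finset_mem t).mpr ?_
      intro x _
      exact Ultrafilter.compl_mem_iff_notMem.mpr (hVU x)
    obtain ⟨A, hA⟩ := Filter.nonempty_of_mem hmem
    simp only [mem_iInter, mem_compl_iff, hit, mem_setOf_eq, not_nonempty_iff_eq_empty] at hA
    obtain ⟨a, ha⟩ := A.nonempty'
    have : a ∈ ⋃ x ∈ t, V x := ht (mem_univ a)
    simp only [mem_iUnion] at this
    obtain ⟨x, hx, hax⟩ := this
    have := hA x hx
    exact absurd this (Nonempty.ne_empty ⟨a, ⟨ha, hax⟩⟩)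
  refine ⟨⟨K, hKclosed, hKne⟩, mem_univ _, ?_⟩
  rw [le_nhds_iff]
  rintro s ⟨O, hO, rfl | rfl⟩ hmem
  · -- K ⊆ O; show sub O ∈ U
    have hsub : K ⊆ O := hmem
    have hcov : ∀ x ∈ Oᶜ, ∃ V : Set X, IsOpen V ∧ x ∈ V ∧ hit V ∉ U := by
      intro x hx
      have : x ∉ K := fun h => hx (hsub h)
      simp only [hK, mem_setOf_eq, not_forall] at this
      obtain ⟨V, h1, h2, h3⟩ := this
      exact ⟨V, h1, h2, h3⟩
    choose! V hVopen hVmem hVU using hcov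
    have hOc : IsCompact Oᶜ := (hO.isClosed_compl).isCompact
    obtain ⟨t, htsub, ht⟩ := hOc.elim_nhds_subcover V
      (fun x hx => (hVopen x hx).mem_nhds (hVmem x hx))
    have hmem2 : (⋂ x ∈ t, (hit (V x))ᶜ) ∈ U := by
      refine (Filter.biInter_finset_mem t).mpr ?_
      intro x hx
      exact Ultrafilter.compl_mem_iff_notMem.mpr (hVU x (htsub x hx))
    refine Filter.mem_of_superset hmem2 ?_
    intro A hA
    simp only [mem_iInter, mem_compl_iff, hit, mem_setOf_eq, not_nonempty_iff_eq_empty] at hA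
    intro a ha
    by_contra hao
    have : a ∈ ⋃ x ∈ t, V x := ht hao
    simp only [mem_iUnion] at this
    obtain ⟨x, hx, hax⟩ := this
    exact absurd (hA x hx) (Nonempty.ne_empty ⟨a, ⟨ha, hax⟩⟩)
  · obtain ⟨x, hxK, hxO⟩ := hmem
    exact hxK O hO hxO


section Sep
variable [CompactSpace X] [T2Space X]

theorem sep_point_closed {x : X} {B : Set X} (hB : IsClosed B) (hx : x ∉ B) :
    ∃ U O : Set X, IsOpen U ∧ IsOpen O ∧ x ∈ U ∧ B ⊆ O ∧ Disjoint U O := by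
  obtain ⟨U, O, hU, hO, hxU, hBO, hd⟩ :=
    normal_separation isClosed_singleton hB (disjoint_singleton_left.mpr hx)
  exact ⟨U, O, hU, hO, singleton_subset_iff.mp hxU, hBO, hd⟩

theorem exists_sep {A B : Hyp X} (h : ¬ A.carrier ⊆ B.carrier) :
    ∃ u v : Set (Hyp X), IsOpen u ∧ IsOpen v ∧ A ∈ u ∧ B ∈ v ∧ Disjoint u v := by
  obtain ⟨x, hxA, hxB⟩ := not_subset.mp h
  obtain ⟨U, O, hU, hO, hxU, hBO, hd⟩ := sep_point_closed B.closed' hxB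
  refine ⟨hit U, sub O, isOpen_hit hU, isOpen_sub hO, ⟨x, hxA, hxU⟩, hBO, ?_⟩
  rw [Set.disjoint_left]
  rintro C ⟨z, hzC, hzU⟩ hCO
  exact hd.le_bot ⟨hzU, hCO hzC⟩

instance : T2Space (Hyp X) := by
  refine ⟨fun A B hne => ?_⟩
  by_cases h : A.carrier ⊆ B.carrier
  · have h2 : ¬ B.carrier ⊆ A.carrier := fun h2 => hne (ext' (h.antisymm h2))
    obtain ⟨u, v, hu, hv, hBu, hAv, hd⟩ := exists_sep h2
    exact ⟨v, u, hv, hu, hAv, hBu, hd.symm⟩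
  · exact exists_sep h

end Sep

theorem chain_exists_min {s : Set (Hyp X)} (hc : IsChain (· ≤ ·) s) (hf : s.Finite)
    (hne : s.Nonempty) : ∃ a ∈ s, ∀ b ∈ s, a ≤ b := by
  obtain ⟨a, ha, hmin'⟩ := hf.exists_minimalFor id s hne
  have hmin : ∀ b ∈ s, b ≤ a → a = b := fun b hb h => le_antisymm (hmin' hb h) h
  refine ⟨a, ha, fun b hb => ?_⟩
  rcases eq_or_ne a b with rfl | hab
  · exact le_refl a
  · rcases hc ha hb hab with h | h
    · exact h
    · exact (hmin b hb h).le

theorem chain_exists_max {s : Set (Hyp X)} (hc : IsChain (· ≤ ·) s) (hf : s.Finite)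
    (hne : s.Nonempty) : ∃ a ∈ s, ∀ b ∈ s, b ≤ a := by
  obtain ⟨a, ha, hmax'⟩ := hf.exists_maximalFor id s hne
  have hmax : ∀ b ∈ s, a ≤ b → a = b := fun b hb h => le_antisymm h (hmax' hb h)
  refine ⟨a, ha, fun b hb => ?_⟩
  rcases eq_or_ne a b with rfl | hab
  · exact le_refl a
  · rcases hc ha hb hab with h | h
    · exact (hmax b hb h).ge
    · exact h

section Chain
variable [CompactSpace X]

theorem nonempty_iInter_inter {D : Set (Hyp X)} (hc : IsChain (· ≤ ·) D) (hne : D.Nonempty)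
    {K : Set X} (hK : IsClosed K) (h : ∀ A ∈ D, (A.carrier ∩ K).Nonempty) :
    ((⋂ A ∈ D, A.carrier) ∩ K).Nonempty := by
  haveI : Nonempty D := hne.to_subtype
  have hdir : Directed (· ⊇ ·) (fun A : D => A.1.carrier ∩ K) := by
    intro A B
    rcases eq_or_ne A.1 B.1 with h' | h'
    · refine ⟨A, subset_rfl, ?_⟩
      show (A.1).carrier ∩ K ⊆ (B.1).carrier ∩ K
      rw [h']
    · rcases hc A.2 B.2 h' with hle | hle
      · exact ⟨A, subset_rfl, inter_subset_inter_left K hle⟩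
      · exact ⟨B, inter_subset_inter_left K hle, subset_rfl⟩
  have := IsCompact.nonempty_iInter_of_directed_nonempty_isCompact_isClosed
    (fun A : D => A.1.carrier ∩ K) hdir
    (fun A => h A.1 A.2)
    (fun A => (A.1.closed'.inter hK).isCompact)
    (fun A => A.1.closed'.inter hK)
  rwa [← iInter_inter, ← biInter_eq_iInter D (fun A _ => A.carrier)] at this

theorem iInter_carrier_nonempty {D : Set (Hyp X)} (hc : IsChain (· ≤ ·) D) (hne : D.Nonempty) :
    (⋂ A ∈ D, A.carrier).Nonempty := by
  have := nonempty_iInter_inter hc hne isClosed_univ (fun A _ => by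
    simpa using A.nonempty')
  simpa using this

theorem exists_le_sub {D : Set (Hyp X)} (hc : IsChain (· ≤ ·) D) (hne : D.Nonempty)
    {O : Set X} (hO : IsOpen O) (hIO : (⋂ A ∈ D, A.carrier) ⊆ O) :
    ∃ A ∈ D, A.carrier ⊆ O := by
  by_contra hcon
  push_neg at hcon
  have h := nonempty_iInter_inter hc hne hO.isClosed_compl (fun A hA => by
    obtain ⟨x, hx, hxO⟩ := not_subset.mp (hcon A hA)
    exact ⟨x, hx, hxO⟩)
  obtain ⟨x, hxI, hxO⟩ := h
  exact hxO (hIO hxI)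


theorem exists_lower_of_finite {D : Set (Hyp X)} (hne : D.Nonempty) (hc : IsChain (· ≤ ·) D)
    (f : Set (Set (Hyp X))) (hfin : f.Finite)
    (key : ∀ s ∈ f, ∃ A ∈ D, ∀ B ∈ D, B ≤ A → B ∈ s) :
    ∃ A ∈ D, ∀ B ∈ D, B ≤ A → ∀ s ∈ f, B ∈ s := by
  refine Set.Finite.induction_on
    (motive := fun g _ => (∀ s ∈ g, ∃ A ∈ D, ∀ B ∈ D, B ≤ A → B ∈ s) →
      ∃ A ∈ D, ∀ B ∈ D, B ≤ A → ∀ s ∈ g, B ∈ s) f hfin ?_ ?_ key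
  · intro _
    obtain ⟨A, hA⟩ := hne
    exact ⟨A, hA, by simp⟩
  · intro s f hsf hfin ih key
    obtain ⟨A₁, hA₁, h1⟩ := ih (fun t ht => key t (mem_insert_of_mem s ht))
    obtain ⟨A₂, hA₂, h2⟩ := key s (mem_insert s f)
    have main : ∀ A ∈ D, A ≤ A₁ → A ≤ A₂ →
        ∃ A ∈ D, ∀ B ∈ D, B ≤ A → ∀ t ∈ insert s f, B ∈ t := by
      intro A hA hle1 hle2
      refine ⟨A, hA, fun B hB hle t htm => ?_⟩
      rcases mem_insert_iff.mp htm with rfl | ht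
      · exact h2 B hB (hle.trans hle2)
      · exact h1 B hB (hle.trans hle1) t ht
    rcases eq_or_ne A₁ A₂ with rfl | hne'
    · exact main A₁ hA₁ le_rfl le_rfl
    · rcases hc hA₁ hA₂ hne' with h | h
      · exact main A₁ hA₁ le_rfl h
      · exact main A₂ hA₂ h le_rfl

theorem exists_upper_of_finite {D : Set (Hyp X)} (hne : D.Nonempty) (hc : IsChain (· ≤ ·) D)
    (f : Set (Set (Hyp X))) (hfin : f.Finite)
    (key : ∀ s ∈ f, ∃ A ∈ D, ∀ B ∈ D, A ≤ B → B ∈ s) :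
    ∃ A ∈ D, ∀ B ∈ D, A ≤ B → ∀ s ∈ f, B ∈ s := by
  refine Set.Finite.induction_on
    (motive := fun g _ => (∀ s ∈ g, ∃ A ∈ D, ∀ B ∈ D, A ≤ B → B ∈ s) →
      ∃ A ∈ D, ∀ B ∈ D, A ≤ B → ∀ s ∈ g, B ∈ s) f hfin ?_ ?_ key
  · intro _
    obtain ⟨A, hA⟩ := hne
    exact ⟨A, hA, by simp⟩
  · intro s f hsf hfin ih key
    obtain ⟨A₁, hA₁, h1⟩ := ih (fun t ht => key t (mem_insert_of_mem s ht))
    obtain ⟨A₂, hA₂, h2⟩ := key s (mem_insert s f)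
    have main : ∀ A ∈ D, A₁ ≤ A → A₂ ≤ A →
        ∃ A ∈ D, ∀ B ∈ D, A ≤ B → ∀ t ∈ insert s f, B ∈ t := by
      intro A hA hle1 hle2
      refine ⟨A, hA, fun B hB hle t htm => ?_⟩
      rcases mem_insert_iff.mp htm with rfl | ht
      · exact h2 B hB (hle2.trans hle)
      · exact h1 B hB (hle1.trans hle) t ht
    rcases eq_or_ne A₁ A₂ with rfl | hne'
    · exact main A₁ hA₁ le_rfl le_rfl
    · rcases hc hA₁ hA₂ hne' with h | h
      · exact main A₂ hA₂ h le_rfl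
      · exact main A₁ hA₁ le_rfl h

/-- The intersection of a subchain is in the closure of the subchain. -/
theorem inf_mem_closure {D : Set (Hyp X)} (hc : IsChain (· ≤ ·) D) (hne : D.Nonempty) :
    (⟨⋂ A ∈ D, A.carrier, isClosed_biInter (fun A _ => A.closed'),
      iInter_carrier_nonempty hc hne⟩ : Hyp X) ∈ closure D := by
  set I : Hyp X := ⟨⋂ A ∈ D, A.carrier, _, _⟩ with hI
  have hbasis := isTopologicalBasis_of_subbasis (topology_eq (X := X))
  rw [hbasis.mem_closure_iff]
  rintro o ⟨f, ⟨hfin, hfsub⟩, rfl⟩ hIo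
  have key : ∀ s ∈ f, ∃ A ∈ D, ∀ B ∈ D, B ≤ A → B ∈ s := by
    intro s hs
    have hIs : I ∈ s := hIo s hs
    obtain ⟨O, hO, hcase | hcase⟩ := hfsub hs
    · subst hcase
      obtain ⟨A, hA, hAO⟩ := exists_le_sub hc hne hO hIs
      exact ⟨A, hA, fun B hB hBA => (le_def.mp hBA).trans hAO⟩
    · subst hcase
      obtain ⟨x, hxI, hxO⟩ := hIs
      obtain ⟨A, hA⟩ := hne
      refine ⟨A, hA, fun B hB _ => ⟨x, ?_, hxO⟩⟩
      exact (biInter_subset_of_mem hB : I.carrier ⊆ B.carrier) hxI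
  obtain ⟨A, hAD, hall⟩ := exists_lower_of_finite hne hc _ hfin key
  exact ⟨A, fun s hs => hall A hAD le_rfl s hs, hAD⟩

/-- The closed sup of a subchain is in the closure of the subchain. -/
theorem sup_mem_closure {D : Set (Hyp X)} (hc : IsChain (· ≤ ·) D) (hne : D.Nonempty) :
    (⟨closure (⋃ A ∈ D, A.carrier), isClosed_closure, by
      obtain ⟨A, hA⟩ := hne
      obtain ⟨x, hx⟩ := A.nonempty'
      exact ⟨x, subset_closure (mem_biUnion hA hx)⟩⟩ : Hyp X) ∈ closure D := by
  set S : Hyp X := ⟨closure (⋃ A ∈ D, A.carrier), _, _⟩ with hS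
  have hbasis := isTopologicalBasis_of_subbasis (topology_eq (X := X))
  rw [hbasis.mem_closure_iff]
  rintro o ⟨f, ⟨hfin, hfsub⟩, rfl⟩ hSo
  have key : ∀ s ∈ f, ∃ A ∈ D, ∀ B ∈ D, A ≤ B → B ∈ s := by
    intro s hs
    have hSs : S ∈ s := hSo s hs
    obtain ⟨O, hO, hcase | hcase⟩ := hfsub hs
    · subst hcase
      obtain ⟨A, hA⟩ := hne
      refine ⟨A, hA, fun B hB _ => ?_⟩
      exact ((subset_biUnion_of_mem hB).trans subset_closure).trans hSs
    · subst hcase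
      obtain ⟨x, hxS, hxO⟩ := hSs
      have : ((⋃ A ∈ D, A.carrier) ∩ O).Nonempty := by
        rcases mem_closure_iff.mp hxS O hO hxO with ⟨y, hyO, hyU⟩
        exact ⟨y, hyU, hyO⟩
      obtain ⟨y, hyU, hyO⟩ := this
      rw [mem_iUnion₂] at hyU
      obtain ⟨A, hA, hyA⟩ := hyU
      exact ⟨A, hA, fun B hB hAB => ⟨y, hAB hyA, hyO⟩⟩
  obtain ⟨A, hAD, hall⟩ := exists_upper_of_finite hne hc _ hfin key
  exact ⟨A, fun s hs => hall A hAD le_rfl s hs, hAD⟩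

end Chain


section Action

variable {G : Type*} [Group G] [TopologicalSpace G] [MulAction G X] [ContinuousSMul G X]

instance : SMul G (Hyp X) :=
  ⟨fun g A => ⟨(g • ·) '' A.carrier, (Homeomorph.smul g).isClosedMap A.carrier A.closed',
    A.nonempty'.image _⟩⟩

theorem smul_carrier (g : G) (A : Hyp X) : (g • A).carrier = (g • ·) '' A.carrier := rfl

instance : MulAction G (Hyp X) where
  one_smul A := ext' (by simp [smul_carrier])
  mul_smul g h A := ext' (by simp [smul_carrier, image_image, mul_smul])

theorem smul_le_smul_iff {g : G} {A B : Hyp X} : g • A ≤ g • B ↔ A ≤ B := by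
  rw [le_def, le_def, smul_carrier, smul_carrier]
  exact Set.image_subset_image_iff (MulAction.injective g)

theorem isChain_smul {g : G} {S : Set (Hyp X)} (h : IsChain (· ≤ ·) S) :
    IsChain (· ≤ ·) ((g • ·) '' S) := by
  rintro _ ⟨A, hA, rfl⟩ _ ⟨B, hB, rfl⟩ hne
  have hAB : A ≠ B := fun hEq => hne (by rw [hEq])
  rcases h hA hB hAB with hle | hle
  · exact Or.inl (smul_le_smul_iff.mpr hle)
  · exact Or.inr (smul_le_smul_iff.mpr hle)

theorem smul_smul_inv_image (g : G) (t : Set (Hyp X)) : (g • ·) '' ((g⁻¹ • ·) '' t) = t := by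
  rw [image_image]
  simp only [smul_inv_smul]
  exact image_id t

theorem isMaxChain_smul {g : G} {S : Set (Hyp X)} (h : IsMaxChain (· ≤ ·) S) :
    IsMaxChain (· ≤ ·) ((g • ·) '' S) := by
  refine ⟨isChain_smul h.1, fun t ht hsub => ?_⟩
  have hsub' : S ⊆ (g⁻¹ • ·) '' t := fun A hA =>
    ⟨g • A, hsub (mem_image_of_mem _ hA), inv_smul_smul g A⟩
  have := h.2 (isChain_smul (g := g⁻¹) ht) hsub'
  rw [this, smul_smul_inv_image]

variable [CompactSpace X]

instance : ContinuousSMul G (Hyp X) := by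
  constructor
  rw [show (instHypTop : TopologicalSpace (Hyp X)) = generateFrom (subbasis X) from rfl,
    continuous_generateFrom_iff]
  rintro s ⟨O, hO, rfl | rfl⟩
  · -- preimage of sub O
    rw [isOpen_iff_mem_nhds]
    rintro ⟨g, A⟩ hmem
    have hpre : IsOpen ((fun q : G × X => q.1 • q.2) ⁻¹' O) := hO.preimage continuous_smul
    have key : ∀ x ∈ A.carrier, ∃ (u : Set G) (v : Set X), IsOpen u ∧ IsOpen v ∧ g ∈ u ∧
        x ∈ v ∧ ∀ g' ∈ u, ∀ y ∈ v, g' • y ∈ O := by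
      intro x hxA
      have : (g, x) ∈ (fun q : G × X => q.1 • q.2) ⁻¹' O := hmem (mem_image_of_mem _ hxA)
      obtain ⟨u, v, hu, hv, hgu, hxv, huv⟩ := isOpen_prod_iff.mp hpre g x this
      exact ⟨u, v, hu, hv, hgu, hxv, fun g' hg' y hy => huv (mk_mem_prod hg' hy)⟩
    choose! u v hu hv hgu hxv huv using key
    obtain ⟨t, htsub, htcov⟩ := A.closed'.isCompact.elim_nhds_subcover v
      (fun x hx => (hv x hx).mem_nhds (hxv x hx))
    have hWopen : IsOpen (⋂ x ∈ t, u x) := isOpen_biInter_finset (fun x hx => hu x (htsub x hx))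
    have hgW : g ∈ ⋂ x ∈ t, u x := mem_biInter (fun x hx => hgu x (htsub x hx))
    have hVopen : IsOpen (⋃ x ∈ t, v x) := isOpen_biUnion (fun x hx => hv x (htsub x hx))
    refine Filter.mem_of_superset
      (prod_mem_nhds (hWopen.mem_nhds hgW) ((isOpen_sub hVopen).mem_nhds htcov)) ?_
    rintro ⟨g', A'⟩ ⟨hg', hA'⟩
    rintro _ ⟨y, hyA', rfl⟩
    obtain ⟨w, hw⟩ := mem_iUnion.mp (hA' hyA')
    obtain ⟨hwt, hyw⟩ := mem_iUnion.mp hw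
    exact huv w (htsub w hwt) g' (by simp only [mem_iInter] at hg'; exact hg' w hwt) y hyw
  · -- preimage of hit O
    rw [isOpen_iff_mem_nhds]
    rintro ⟨g, A⟩ ⟨_, ⟨x, hxA, rfl⟩, hxO⟩
    have hpre : IsOpen ((fun q : G × X => q.1 • q.2) ⁻¹' O) := hO.preimage continuous_smul
    obtain ⟨u, v, hu, hv, hgu, hxv, huv⟩ := isOpen_prod_iff.mp hpre g x hxO
    refine Filter.mem_of_superset
      (prod_mem_nhds (hu.mem_nhds hgu) ((isOpen_hit hv).mem_nhds ⟨x, hxA, hxv⟩)) ?_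
    rintro ⟨g', A'⟩ ⟨hg', z, hzA', hzv⟩
    exact ⟨g' • z, mem_image_of_mem _ hzA', huv (mk_mem_prod hg' hzv)⟩

end Action


section MaxChain

variable (X) [Nonempty X]

/-- the whole space as an element of the hyperspace -/
def top' : Hyp X := ⟨univ, isClosed_univ, univ_nonempty⟩

/-- A "gap" in a family of closed sets: two points `x ≠ y` and a floor `F` (empty or a member)
not containing them, such that every member is below the floor or contains both points.
A chain with a gap can be extended by `F ∪ {x}`. -/
def Gap (S : Set (Hyp X)) : Prop :=
  ∃ x y : X, x ≠ y ∧ ∃ F : Set X,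
    (F = ∅ ∨ ∃ B ∈ S, B.carrier = F) ∧ x ∉ F ∧ y ∉ F ∧
    ∀ A ∈ S, A.carrier ⊆ F ∨ (x ∈ A.carrier ∧ y ∈ A.carrier)

variable {X}

theorem IsMaxChain.top'_mem {S : Set (Hyp X)} (h : IsMaxChain (· ≤ ·) S) : top' X ∈ S := by
  have hins : IsChain (· ≤ ·) (insert (top' X) S) :=
    h.1.insert (fun B _ _ => Or.inr (le_def.mpr (subset_univ _)))
  have := h.2 hins (subset_insert _ _)
  rw [this]
  exact mem_insert _ _

theorem IsMaxChain.not_gap [T1Space X] {S : Set (Hyp X)} (h : IsMaxChain (· ≤ ·) S) :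
    ¬ Gap X S := by
  rintro ⟨x, y, hxy, F, hFmem, hxF, hyF, hall⟩
  have hFclosed : IsClosed F := by
    rcases hFmem with rfl | ⟨B, _, rfl⟩
    · exact isClosed_empty
    · exact B.closed'
  set E : Hyp X := ⟨insert x F, by rw [insert_eq]; exact isClosed_singleton.union hFclosed,
    ⟨x, mem_insert x F⟩⟩ with hE
  have hEchain : IsChain (· ≤ ·) (insert E S) := by
    refine h.1.insert (fun B hB _ => ?_)
    rcases hall B hB with hsub | ⟨hxB, hyB⟩
    · exact Or.inr (le_def.mpr (hsub.trans (subset_insert x F)))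
    · refine Or.inl (le_def.mpr (insert_subset hxB ?_))
      rcases hFmem with rfl | ⟨C, hC, rfl⟩
      · exact empty_subset _
      · rcases eq_or_ne C B with rfl | hCB
        · exact subset_rfl
        · rcases h.1 hC hB hCB with hle | hle
          · exact hle
          · exact absurd (hle hxB) hxF
  have hES : E ∉ S := by
    intro hES
    rcases hall E hES with hsub | ⟨-, hyE⟩
    · exact hxF (hsub (mem_insert x F))
    · rcases mem_insert_iff.mp hyE with rfl | hyF'
      · exact hxy rfl
      · exact hyF hyF'
  have := h.2 hEchain (subset_insert E S)
  exact hES (this ▸ mem_insert E S)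

variable [CompactSpace X] [T2Space X]

/-- two incomparable closed sets admit open neighbourhoods (in the Vietoris topology)
consisting of pairwise incomparable sets -/
theorem sep_incomp {A B : Hyp X} (h1 : ¬ A ≤ B) (h2 : ¬ B ≤ A) :
    ∃ N1 N2 : Set (Hyp X), IsOpen N1 ∧ IsOpen N2 ∧ A ∈ N1 ∧ B ∈ N2 ∧
      ∀ A' ∈ N1, ∀ B' ∈ N2, ¬ A' ≤ B' ∧ ¬ B' ≤ A' := by
  obtain ⟨x, hxA, hxB⟩ := not_subset.mp h1
  obtain ⟨y, hyB, hyA⟩ := not_subset.mp h2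
  obtain ⟨U, O1, hU, hO1, hxU, hBO1, hUO1⟩ := sep_point_closed B.closed' hxB
  obtain ⟨V, O2, hV, hO2, hyV, hAO2, hVO2⟩ := sep_point_closed A.closed' hyA
  refine ⟨hit U ∩ sub O2, hit V ∩ sub O1, (isOpen_hit hU).inter (isOpen_sub hO2),
    (isOpen_hit hV).inter (isOpen_sub hO1), ⟨⟨x, hxA, hxU⟩, hAO2⟩, ⟨⟨y, hyB, hyV⟩, hBO1⟩, ?_⟩
  rintro A' ⟨⟨z, hzA', hzU⟩, hA'O2⟩ B' ⟨⟨w, hwB', hwV⟩, hB'O1⟩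
  constructor
  · intro hle
    exact hUO1.le_bot ⟨hzU, hB'O1 (hle hzA')⟩
  · intro hle
    exact hVO2.le_bot ⟨hwV, hA'O2 (hle hwB')⟩

theorem isChain_closure {S : Set (Hyp X)} (h : IsChain (· ≤ ·) S) :
    IsChain (· ≤ ·) (closure S) := by
  intro A hA B hB hne
  by_contra hcon
  push_neg at hcon
  obtain ⟨h1, h2⟩ := hcon
  obtain ⟨N1, N2, hN1, hN2, hAN1, hBN2, hsep⟩ := sep_incomp h1 h2
  obtain ⟨A', hA'N1, hA'S⟩ := mem_closure_iff.mp hA N1 hN1 hAN1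
  obtain ⟨B', hB'N2, hB'S⟩ := mem_closure_iff.mp hB N2 hN2 hBN2
  have hAB' : A' ≠ B' := by
    rintro rfl
    exact (hsep A' hA'N1 A' hB'N2).1 le_rfl
  rcases h hA'S hB'S hAB' with hle | hle
  · exact (hsep A' hA'N1 B' hB'N2).1 hle
  · exact (hsep A' hA'N1 B' hB'N2).2 hle

/-- non-maximality of a Vietoris-closed chain containing `univ` yields a gap -/
theorem gap_of_not_maxChain {S : Set (Hyp X)} (hcl : IsClosed S)
    (hchain : IsChain (· ≤ ·) S) (htop : top' X ∈ S)
    (hnmax : ¬ IsMaxChain (· ≤ ·) S) : Gap X S := by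
  simp only [IsMaxChain, not_and, not_forall] at hnmax
  obtain ⟨t, ht, hst, hne⟩ := hnmax hchain
  have : ¬ t ⊆ S := fun hts => hne (hst.antisymm hts)
  obtain ⟨E, hEt, hES⟩ := not_subset.mp this
  have comp : ∀ A ∈ S, A ≤ E ∨ E ≤ A := by
    intro A hA
    have hAE : A ≠ E := fun hEq => hES (hEq ▸ hA)
    exact ht (hst hA) hEt hAE
  set 𝒜 : Set (Hyp X) := {A ∈ S | E ≤ A} with h𝒜
  have h𝒜chain : IsChain (· ≤ ·) 𝒜 := hchain.mono (sep_subset _ _)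
  have h𝒜ne : 𝒜.Nonempty := ⟨top' X, htop, le_def.mpr (subset_univ _)⟩
  have hclosS : closure 𝒜 ⊆ S := by
    rw [← hcl.closure_eq]; exact closure_mono (sep_subset _ _)
  set I : Hyp X := ⟨⋂ A ∈ 𝒜, A.carrier, isClosed_biInter (fun A _ => A.closed'),
    iInter_carrier_nonempty h𝒜chain h𝒜ne⟩ with hIdef
  have hI : I ∈ S := hclosS (inf_mem_closure h𝒜chain h𝒜ne)
  have hEI : E ≤ I := le_def.mpr (subset_iInter₂ (fun A hA => le_def.mp hA.2))
  have hIE : I ≠ E := fun hEq => hES (hEq ▸ hI)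
  have : ¬ I.carrier ⊆ E.carrier := fun hsub => hIE (le_antisymm (le_def.mpr hsub) hEI)
  obtain ⟨y, hyI, hyE⟩ := not_subset.mp this
  set ℬ : Set (Hyp X) := {A ∈ S | A ≤ E} with hℬ
  rcases ℬ.eq_empty_or_nonempty with hemp | hℬne
  · obtain ⟨x, hxE⟩ := E.nonempty'
    refine ⟨x, y, fun hEq => hyE (hEq ▸ hxE), ∅, Or.inl rfl, notMem_empty x,
      notMem_empty y, ?_⟩
    intro A hA
    have hEA : E ≤ A := by
      rcases comp A hA with hle | hle
      · have : A ∈ ℬ := ⟨hA, hle⟩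
        rw [hemp] at this
        exact absurd this (notMem_empty A)
      · exact hle
    exact Or.inr ⟨hEA hxE, mem_iInter₂.mp hyI A ⟨hA, hEA⟩⟩
  · have hℬchain : IsChain (· ≤ ·) ℬ := hchain.mono (sep_subset _ _)
    have hclosS' : closure ℬ ⊆ S := by
      rw [← hcl.closure_eq]; exact closure_mono (sep_subset _ _)
    set F0 : Hyp X := ⟨closure (⋃ A ∈ ℬ, A.carrier), isClosed_closure, by
      obtain ⟨A, hA⟩ := hℬne
      obtain ⟨z, hz⟩ := A.nonempty'
      exact ⟨z, subset_closure (mem_biUnion hA hz)⟩⟩ with hF0def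
    have hF0 : F0 ∈ S := hclosS' (sup_mem_closure hℬchain hℬne)
    have hF0E : F0 ≤ E :=
      le_def.mpr (closure_minimal (iUnion₂_subset fun A hA => le_def.mp hA.2) E.closed')
    have hF0ne : F0 ≠ E := fun hEq => hES (hEq ▸ hF0)
    have : ¬ E.carrier ⊆ F0.carrier := fun hsub => hF0ne (le_antisymm hF0E (le_def.mpr hsub))
    obtain ⟨x, hxE, hxF0⟩ := not_subset.mp this
    refine ⟨x, y, fun hEq => hyE (hEq ▸ hxE), F0.carrier, Or.inr ⟨F0, hF0, rfl⟩, hxF0,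
      fun hyF0 => hyE (hF0E hyF0), ?_⟩
    intro A hA
    rcases comp A hA with hle | hle
    · exact Or.inl ((subset_biUnion_of_mem (⟨hA, hle⟩ : A ∈ ℬ) : A.carrier ⊆ _).trans
        subset_closure)
    · exact Or.inr ⟨hle hxE, mem_iInter₂.mp hyI A ⟨hA, hle⟩⟩


theorem gap_nbhd {C : Hyp (Hyp X)} (hgap : Gap X C.carrier) :
    ∃ W : Set (Hyp (Hyp X)), IsOpen W ∧ C ∈ W ∧
      ∀ C' : Hyp (Hyp X), C' ∈ W → IsChain (· ≤ ·) C'.carrier → top' X ∈ C'.carrier →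
        Gap X C'.carrier := by
  obtain ⟨x, y, hxy, F, hFmem, hxF, hyF, hall⟩ := hgap
  have hFclosed : IsClosed F := by
    rcases hFmem with rfl | ⟨B, _, rfl⟩
    exacts [isClosed_empty, B.closed']
  -- choose the separating open sets
  obtain ⟨U₂, Q, hU₂, hQ, hxU₂, hQsup, hdisj1⟩ :=
    sep_point_closed (isClosed_singleton.union hFclosed)
      (by simp only [mem_union, mem_singleton_iff]; tauto)
  have hclU₂ : closure U₂ ⊆ Qᶜ :=
    closure_minimal (disjoint_left.mp hdisj1 : ∀ ⦃a⦄, a ∈ U₂ → a ∉ Q) hQ.isClosed_compl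
  have hyclU₂ : y ∉ closure U₂ := fun h => hclU₂ h (hQsup (Or.inl rfl))
  have hFclU₂ : F ∩ closure U₂ = ∅ := by
    rw [eq_empty_iff_forall_notMem]
    rintro z ⟨hzF, hzcl⟩
    exact hclU₂ hzcl (hQsup (Or.inr hzF))
  obtain ⟨V₂, R, hV₂, hR, hyV₂, hRsup, hdisj2⟩ :=
    sep_point_closed (isClosed_closure.union hFclosed)
      (by
        rintro (h | h)
        exacts [hyclU₂ h, hyF h])
  have hclV₂ : closure V₂ ⊆ Rᶜ :=
    closure_minimal (disjoint_left.mp hdisj2) hR.isClosed_compl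
  have hFclV₂ : F ∩ closure V₂ = ∅ := by
    rw [eq_empty_iff_forall_notMem]
    rintro z ⟨hzF, hzcl⟩
    exact hclV₂ hzcl (hRsup (Or.inr hzF))
  have hclUV : closure U₂ ∩ closure V₂ = ∅ := by
    rw [eq_empty_iff_forall_notMem]
    rintro z ⟨hzU, hzV⟩
    exact hclV₂ hzV (hRsup (Or.inl hzU))
  obtain ⟨U₁, O1, hU₁, hO1, hxU₁, hO1sup, hdisjU⟩ :=
    sep_point_closed hU₂.isClosed_compl (by simpa using hxU₂)
  have hclU₁ : closure U₁ ⊆ U₂ := by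
    have h1 : closure U₁ ⊆ O1ᶜ :=
      closure_minimal (disjoint_left.mp hdisjU) hO1.isClosed_compl
    intro z hz
    by_contra hzU₂
    exact h1 hz (hO1sup hzU₂)
  obtain ⟨V₁, O2, hV₁, hO2, hyV₁, hO2sup, hdisjV⟩ :=
    sep_point_closed hV₂.isClosed_compl (by simpa using hyV₂)
  have hclV₁ : closure V₁ ⊆ V₂ := by
    have h1 : closure V₁ ⊆ O2ᶜ :=
      closure_minimal (disjoint_left.mp hdisjV) hO2.isClosed_compl
    intro z hz
    by_contra hzV₂
    exact h1 hz (hO2sup hzV₂)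
  -- the Vietoris-open set
  set N : Set (Hyp X) := sub ((closure U₂ ∪ closure V₂)ᶜ) ∪ (hit U₁ ∩ hit V₁) with hN
  have hNopen : IsOpen N :=
    (isOpen_sub (isClosed_closure.union isClosed_closure).isOpen_compl).union
      ((isOpen_hit hU₁).inter (isOpen_hit hV₁))
  have hCN : C.carrier ⊆ N := by
    intro A hA
    rcases hall A hA with hsub | ⟨hxA, hyA⟩
    · refine Or.inl (fun z hz => ?_)
      rintro (hzU | hzV)
      · exact (eq_empty_iff_forall_notMem.mp hFclU₂) z ⟨hsub hz, hzU⟩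
      · exact (eq_empty_iff_forall_notMem.mp hFclV₂) z ⟨hsub hz, hzV⟩
    · exact Or.inr ⟨⟨x, hxA, hxU₁⟩, ⟨y, hyA, hyV₁⟩⟩
  refine ⟨sub N, isOpen_sub hNopen, hCN, ?_⟩
  intro C' hC'W hchain htop
  set 𝒜 : Set (Hyp X) :=
    {A ∈ C'.carrier | (A.carrier ∩ U₁).Nonempty ∧ (A.carrier ∩ V₁).Nonempty} with h𝒜
  have h𝒜top : top' X ∈ 𝒜 := ⟨htop, ⟨x, mem_univ x, hxU₁⟩, ⟨y, mem_univ y, hyV₁⟩⟩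
  have h𝒜chain : IsChain (· ≤ ·) 𝒜 := hchain.mono (sep_subset _ _)
  have h𝒜ne : 𝒜.Nonempty := ⟨_, h𝒜top⟩
  have hclosC' : closure 𝒜 ⊆ C'.carrier := by
    rw [← C'.closed'.closure_eq]; exact closure_mono (sep_subset _ _)
  set I : Hyp X := ⟨⋂ A ∈ 𝒜, A.carrier, isClosed_biInter (fun A _ => A.closed'),
    iInter_carrier_nonempty h𝒜chain h𝒜ne⟩ with hIdef
  have hI : I ∈ C'.carrier := hclosC' (inf_mem_closure h𝒜chain h𝒜ne)
  obtain ⟨x', hx'I, hx'U⟩ := nonempty_iInter_inter h𝒜chain h𝒜ne isClosed_closure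
    (fun A hA => hA.2.1.mono (inter_subset_inter_right _ subset_closure))
  obtain ⟨y', hy'I, hy'V⟩ := nonempty_iInter_inter h𝒜chain h𝒜ne isClosed_closure
    (fun A hA => hA.2.2.mono (inter_subset_inter_right _ subset_closure))
  have hx'y' : x' ≠ y' := by
    rintro rfl
    exact (eq_empty_iff_forall_notMem.mp hclUV) x'
      ⟨subset_closure (hclU₁ hx'U), subset_closure (hclV₁ hy'V)⟩
  set ℬ : Set (Hyp X) := {A ∈ C'.carrier | A ≤ I ∧ A ≠ I} with hℬ
  have hℬsub : ∀ A ∈ ℬ, A.carrier ⊆ U₂ᶜ ∩ V₂ᶜ := by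
    rintro A ⟨hAC, hAle, hAne⟩
    rcases hC'W hAC with hsub | ⟨hhitU, hhitV⟩
    · intro z hz
      have := hsub hz
      simp only [mem_compl_iff, mem_union, not_or] at this
      exact ⟨fun h => this.1 (subset_closure h), fun h => this.2 (subset_closure h)⟩
    · exfalso
      have hA𝒜 : A ∈ 𝒜 := ⟨hAC, hhitU, hhitV⟩
      have hIA : I ≤ A := le_def.mpr (fun z hz => mem_iInter₂.mp hz A hA𝒜)
      exact hAne (le_antisymm hAle hIA)
  have hcomp : ∀ A ∈ C'.carrier, (A ∈ ℬ) ∨ (x' ∈ A.carrier ∧ y' ∈ A.carrier) := by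
    intro A hA
    rcases eq_or_ne A I with rfl | hne
    · exact Or.inr ⟨hx'I, hy'I⟩
    · rcases hchain hA hI hne with hle | hle
      · exact Or.inl ⟨hA, hle, hne⟩
      · exact Or.inr ⟨hle hx'I, hle hy'I⟩
  rcases ℬ.eq_empty_or_nonempty with hemp | hℬne
  · refine ⟨x', y', hx'y', ∅, Or.inl rfl, notMem_empty x', notMem_empty y', ?_⟩
    intro A hA
    rcases hcomp A hA with hB | hxy'
    · rw [hemp] at hB
      exact absurd hB (notMem_empty A)
    · exact Or.inr hxy'
  · have hℬchain : IsChain (· ≤ ·) ℬ := hchain.mono (sep_subset _ _)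
    have hclosC'' : closure ℬ ⊆ C'.carrier := by
      rw [← C'.closed'.closure_eq]; exact closure_mono (sep_subset _ _)
    set F0 : Hyp X := ⟨closure (⋃ A ∈ ℬ, A.carrier), isClosed_closure, by
      obtain ⟨A, hA⟩ := hℬne
      obtain ⟨z, hz⟩ := A.nonempty'
      exact ⟨z, subset_closure (mem_biUnion hA hz)⟩⟩ with hF0def
    have hF0 : F0 ∈ C'.carrier := hclosC'' (sup_mem_closure hℬchain hℬne)
    have hF0sub : F0.carrier ⊆ U₂ᶜ ∩ V₂ᶜ :=
      closure_minimal (iUnion₂_subset fun A hA => hℬsub A hA)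
        ((hU₂.isClosed_compl).inter hV₂.isClosed_compl)
    have hx'F0 : x' ∉ F0.carrier := fun h => (hF0sub h).1 (hclU₁ hx'U)
    have hy'F0 : y' ∉ F0.carrier := fun h => (hF0sub h).2 (hclV₁ hy'V)
    refine ⟨x', y', hx'y', F0.carrier, Or.inr ⟨F0, hF0, rfl⟩, hx'F0, hy'F0, ?_⟩
    intro A hA
    rcases hcomp A hA with hB | hxy'
    · exact Or.inl ((subset_biUnion_of_mem hB : A.carrier ⊆ _).trans subset_closure)
    · exact Or.inr hxy'

theorem isClosed_topmem : IsClosed {C : Hyp (Hyp X) | top' X ∈ C.carrier} := by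
  rw [← isOpen_compl_iff, isOpen_iff_mem_nhds]
  intro C hC
  obtain ⟨Wt, O, hWt, hO, htopW, hCO, hdisj⟩ := sep_point_closed (X := Hyp X) C.closed' hC
  refine Filter.mem_of_superset ((isOpen_sub hO).mem_nhds hCO) ?_
  intro C' hC' htopC'
  exact hdisj.le_bot ⟨htopW, hC' htopC'⟩

variable (X)

/-- the set of maximal chains, as a subset of the double hyperspace -/
def MCset : Set (Hyp (Hyp X)) := {C | IsMaxChain (· ≤ ·) C.carrier}

variable {X}

theorem isClosed_MCset : IsClosed (MCset X) := by
  rw [← isOpen_compl_iff, isOpen_iff_mem_nhds]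
  intro C hC
  by_cases hchain : IsChain (· ≤ ·) C.carrier
  · by_cases htop : top' X ∈ C.carrier
    · have hgap : Gap X C.carrier := gap_of_not_maxChain C.closed' hchain htop hC
      obtain ⟨W, hW, hCW, hWgap⟩ := gap_nbhd hgap
      refine Filter.mem_of_superset (hW.mem_nhds hCW) ?_
      intro C' hC'W hC'max
      exact IsMaxChain.not_gap hC'max (hWgap C' hC'W hC'max.1 (IsMaxChain.top'_mem hC'max))
    · refine Filter.mem_of_superset (isClosed_topmem.isOpen_compl.mem_nhds htop) ?_
      intro C' hC' hC'max
      exact hC' (IsMaxChain.top'_mem hC'max)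
  · simp only [IsChain, Set.Pairwise, not_forall] at hchain
    obtain ⟨A, hA, B, hB, hne, hnot⟩ := hchain
    rw [not_or] at hnot
    obtain ⟨N1, N2, hN1, hN2, hAN1, hBN2, hsep⟩ := sep_incomp hnot.1 hnot.2
    refine Filter.mem_of_superset
      (((isOpen_hit hN1).inter (isOpen_hit hN2)).mem_nhds ⟨⟨A, hA, hAN1⟩, ⟨B, hB, hBN2⟩⟩) ?_
    rintro C' ⟨⟨A', hA', hA'N1⟩, ⟨B', hB', hB'N2⟩⟩ hC'max
    have hA'B' : A' ≠ B' := by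
      rintro rfl
      exact (hsep A' hA'N1 A' hB'N2).1 le_rfl
    rcases hC'max.1 hA' hB' hA'B' with hle | hle
    · exact (hsep A' hA'N1 B' hB'N2).1 hle
    · exact (hsep A' hA'N1 B' hB'N2).2 hle

theorem MCset_nonempty : (MCset X).Nonempty := by
  have hsing : IsChain (· ≤ ·) ({top' X} : Set (Hyp X)) := by
    rintro a rfl b rfl hne
    exact absurd rfl hne
  obtain ⟨S, hmax, hsub⟩ := hsing.exists_maxChain
  have hSeq : S = closure S := hmax.2 (isChain_closure hmax.1) subset_closure
  have hScl : IsClosed S := by rw [hSeq]; exact isClosed_closure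
  exact ⟨⟨S, hScl, ⟨top' X, hsub rfl⟩⟩, hmax⟩

end MaxChain


section Equivariance

variable {G : Type*} [Group G] [TopologicalSpace G] [MulAction G X] [ContinuousSMul G X]
variable [CompactSpace X] [T2Space X] [Nonempty X]

theorem smul_MCset {g : G} {C : Hyp (Hyp X)} (h : C ∈ MCset X) : g • C ∈ MCset X := by
  show IsMaxChain (· ≤ ·) (g • C).carrier
  exact isMaxChain_smul h

end Equivariance

end Hyp
end Usp

/-- If `M` is a universal minimal compact `G`-space, `p ∈ M` and `H` is the stabilizer of `p`,
then there exists an `H`-invariant maximal chain of nonempty closed subsets of `M`. -/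
theorem statement2 (G : Type u) [Group G] [TopologicalSpace G] [IsTopologicalGroup G]
    (M : Type v) [TopologicalSpace M] [CompactSpace M] [T2Space M] [Nonempty M]
    [MulAction G M] [ContinuousSMul G M]
    (hmin : ∀ A : Set M, A.Nonempty → IsClosed A →
      (∀ (g : G), ∀ x ∈ A, g • x ∈ A) → A = Set.univ)
    (huniv : ∀ (Y : Type v) [TopologicalSpace Y] [CompactSpace Y] [T2Space Y]
      [MulAction G Y] [ContinuousSMul G Y], Nonempty Y →
      ∃ f : M → Y, Continuous f ∧ ∀ (g : G) (x : M), f (g • x) = g • f x)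
    (p : M) :
    ∃ C : Set (Set M),
      (∀ F ∈ C, F.Nonempty ∧ IsClosed F) ∧
      IsChain (· ⊆ ·) C ∧
      (∀ C' : Set (Set M), (∀ F ∈ C', F.Nonempty ∧ IsClosed F) →
        IsChain (· ⊆ ·) C' → C ⊆ C' → C' = C) ∧
      (∀ F ∈ C, ∀ g : G, g • p = p → (fun x => g • x) '' F ∈ C) := by
  classical
  haveI : CompactSpace {C : Usp.Hyp (Usp.Hyp M) // C ∈ Usp.Hyp.MCset M} :=
    isCompact_iff_compactSpace.mp (Usp.Hyp.isClosed_MCset.isCompact)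
  letI : MulAction G {C : Usp.Hyp (Usp.Hyp M) // C ∈ Usp.Hyp.MCset M} :=
    { smul := fun g C => ⟨g • C.1, Usp.Hyp.smul_MCset C.2⟩
      one_smul := fun C => Subtype.ext (one_smul G C.1)
      mul_smul := fun g h C => Subtype.ext (mul_smul g h C.1) }
  haveI : ContinuousSMul G {C : Usp.Hyp (Usp.Hyp M) // C ∈ Usp.Hyp.MCset M} :=
    ⟨Continuous.subtype_mk (continuous_smul.comp
      (continuous_fst.prodMk (continuous_subtype_val.comp continuous_snd))) _⟩
  have h0 := Usp.Hyp.MCset_nonempty (X := M)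
  haveI hne : Nonempty {C : Usp.Hyp (Usp.Hyp M) // C ∈ Usp.Hyp.MCset M} :=
    ⟨⟨h0.choose, h0.choose_spec⟩⟩
  obtain ⟨f, hfc, heq⟩ := huniv {C : Usp.Hyp (Usp.Hyp M) // C ∈ Usp.Hyp.MCset M} hne
  set C0 : Usp.Hyp (Usp.Hyp M) := (f p).1 with hC0
  have hmaxC0 : IsMaxChain (· ≤ ·) C0.carrier := (f p).2
  refine ⟨Usp.Hyp.carrier '' C0.carrier, ?_, ?_, ?_, ?_⟩
  · rintro F ⟨A, hA, rfl⟩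
    exact ⟨A.nonempty', A.closed'⟩
  · rintro _ ⟨A, hA, rfl⟩ _ ⟨B, hB, rfl⟩ hne'
    have hAB : A ≠ B := fun h => hne' (congrArg Usp.Hyp.carrier h)
    exact hmaxC0.1 hA hB hAB
  · intro C' hC'cond hC'chain hCC'
    have htchain : IsChain (· ≤ ·) {A : Usp.Hyp M | A.carrier ∈ C'} := by
      intro A hA B hB hne'
      have h' : A.carrier ≠ B.carrier := fun h => hne' (Usp.Hyp.ext' h)
      exact hC'chain hA hB h'
    have hsubt : C0.carrier ⊆ {A : Usp.Hyp M | A.carrier ∈ C'} :=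
      fun A hA => hCC' (Set.mem_image_of_mem _ hA)
    have hteq := hmaxC0.2 htchain hsubt
    refine Set.Subset.antisymm ?_ hCC'
    intro F hF
    obtain ⟨hne', hcl⟩ := hC'cond F hF
    have hmem : (⟨F, hcl, hne'⟩ : Usp.Hyp M) ∈ {A : Usp.Hyp M | A.carrier ∈ C'} := hF
    rw [← hteq] at hmem
    exact ⟨_, hmem, rfl⟩
  · rintro _ ⟨A, hA, rfl⟩ g hgp
    have hfix : f p = g • f p := by
      conv_lhs => rw [← hgp]
      exact heq g p
    have hval : C0 = g • C0 := congrArg Subtype.val hfix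
    have hcar : C0.carrier = (g • ·) '' C0.carrier := congrArg Usp.Hyp.carrier hval
    refine ⟨g • A, ?_, rfl⟩
    rw [hcar]
    exact Set.mem_image_of_mem _ hA
end

section
/- Let K be a T1 topological space and let C be a maximal chain of nonempty closed subsets of K. Suppose F1, F2 ∈ C are such that F1 ⊆ F2 and every F ∈ C satisfies either F ⊆ F1 or F2 ⊆ F. Then the set difference F2 \ F1 contains at most one point. -/
universe u

/-- In a T1 space, a "gap" in a maximal chain of nonempty closed subsets contains at most
one point. -/
theorem statement6 (K : Type u) [TopologicalSpace K] [T1Space K]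
    (C : Set (Set K)) (hC : ∀ F ∈ C, F.Nonempty ∧ IsClosed F)
    (hchain : IsChain (· ⊆ ·) C)
    (hmax : ∀ C' : Set (Set K), (∀ F ∈ C', F.Nonempty ∧ IsClosed F) →
      IsChain (· ⊆ ·) C' → C ⊆ C' → C' = C)
    (F₁ F₂ : Set K) (h₁ : F₁ ∈ C) (h₂ : F₂ ∈ C) (h₁₂ : F₁ ⊆ F₂)
    (hgap : ∀ F ∈ C, F ⊆ F₁ ∨ F₂ ⊆ F) :
    (F₂ \ F₁).Subsingleton := by
  intro x hx y hy
  by_contra hxy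
  -- build F' = F₁ ∪ {x}
  set F' : Set K := insert x F₁ with hF'
  have hF'closed : IsClosed F' := by rw [hF', Set.insert_eq]; exact isClosed_singleton.union (hC F₁ h₁).2
  have hF'sub : F' ⊆ F₂ := Set.insert_subset hx.1 h₁₂
  have hmem : F' ∈ C := by
    have hCeq := hmax (insert F' C)
      (by
        rintro F (rfl | hF)
        · exact ⟨⟨x, Set.mem_insert x F₁⟩, hF'closed⟩
        · exact hC F hF)
      (by
        intro A hA B hB hAB
        rcases hA with rfl | hA <;> rcases hB with rfl | hB
        · exact absurd rfl hAB
        · rcases hgap B hB with h | h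
          · exact Or.inr (h.trans (Set.subset_insert x F₁))
          · exact Or.inl (hF'sub.trans h)
        · rcases hgap A hA with h | h
          · exact Or.inl (h.trans (Set.subset_insert x F₁))
          · exact Or.inr (hF'sub.trans h)
        · exact hchain hA hB hAB)
      (Set.subset_insert F' C)
    rw [← hCeq]; exact Set.mem_insert F' C
  rcases hgap F' hmem with h | h
  · exact hx.2 (h (Set.mem_insert x F₁))
  · rcases h hy.1 with rfl | hyF₁
    · exact hxy rfl
    · exact hy.2 hyF₁
end

section
/- Let K be a nonempty compact Hausdorff space and let C be a maximal chain of nonempty closed subsets of K. Then K itself belongs to C, the intersection ⋂C of all members of C belongs to C, and ⋂C is a singleton. -/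
universe u

/-- A maximal chain `C` of nonempty closed subsets of a nonempty compact Hausdorff space `K`
contains `K` itself, contains the intersection of all its members, and that intersection is
a singleton. -/
theorem statement7 (K : Type u) [TopologicalSpace K] [CompactSpace K] [T2Space K] [Nonempty K]
    (C : Set (Set K)) (hC : ∀ F ∈ C, F.Nonempty ∧ IsClosed F)
    (hchain : IsChain (· ⊆ ·) C)
    (hmax : ∀ C' : Set (Set K), (∀ F ∈ C', F.Nonempty ∧ IsClosed F) →
      IsChain (· ⊆ ·) C' → C ⊆ C' → C' = C) :
    Set.univ ∈ C ∧ ⋂₀ C ∈ C ∧ ∃ x : K, ⋂₀ C = {x} := by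
  -- key step: any nonempty closed set comparable with everything in C belongs to C
  have key : ∀ S : Set K, S.Nonempty → IsClosed S →
      (∀ F ∈ C, S ⊆ F ∨ F ⊆ S) → S ∈ C := by
    intro S hSn hScl hcomp
    have h := hmax (insert S C)
      (by
        rintro F (rfl | hF)
        · exact ⟨hSn, hScl⟩
        · exact hC F hF)
      (by
        intro a ha b hb hab
        rcases ha with rfl | ha
        · rcases hb with rfl | hb
          · exact absurd rfl hab
          · exact (hcomp b hb).imp id id
        · rcases hb with rfl | hb
          · exact ((hcomp a ha).symm).imp id id
          · exact hchain ha hb hab)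
      (Set.subset_insert _ _)
    rw [← h]; exact Set.mem_insert _ _
  have huniv : Set.univ ∈ C :=
    key Set.univ Set.univ_nonempty isClosed_univ (fun F hF => Or.inr (Set.subset_univ F))
  -- the intersection is nonempty
  have hCne : Nonempty C := ⟨⟨Set.univ, huniv⟩⟩
  have hdir : DirectedOn (· ⊇ ·) C := by
    intro a ha b hb
    rcases hchain.total ha hb with h | h
    · exact ⟨a, ha, le_refl _, h⟩
    · exact ⟨b, hb, h, le_refl _⟩
  have hInter : (⋂₀ C).Nonempty :=
    IsCompact.nonempty_sInter_of_directed_nonempty_isCompact_isClosed hdir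
      (fun F hF => (hC F hF).1) (fun F hF => (hC F hF).2.isCompact)
      (fun F hF => (hC F hF).2)
  have hIcl : IsClosed (⋂₀ C) := isClosed_sInter fun F hF => (hC F hF).2
  have hImem : ⋂₀ C ∈ C :=
    key _ hInter hIcl (fun F hF => Or.inl (Set.sInter_subset_of_mem hF))
  obtain ⟨x, hx⟩ := hInter
  refine ⟨huniv, hImem, x, ?_⟩
  have hxC : ({x} : Set K) ∈ C := by
    refine key {x} ⟨x, rfl⟩ isClosed_singleton (fun F hF => Or.inl ?_)
    exact Set.singleton_subset_iff.2 (hx F hF)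
  exact Set.Subset.antisymm (Set.sInter_subset_of_mem hxC)
    (Set.singleton_subset_iff.2 hx)
end

section
/- Let G be a topological group and let M and M' both be universal minimal compact G-spaces. Then there exists a G-equivariant homeomorphism from M onto M'. -/
universe u v

section Aux

variable {G : Type u} [Group G] [TopologicalSpace G] [IsTopologicalGroup G]
variable {M : Type v} [TopologicalSpace M] [CompactSpace M] [T2Space M] [Nonempty M]
  [MulAction G M] [ContinuousSMul G M]

/-- Every continuous `G`-equivariant self-map of a universal minimal compact `G`-space
is injective.  This is proved via the Ellis semigroup (the closure of the set of
translations in `M → M`), a minimal left ideal therein, and the Ellis–Numakura lemma. -/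
theorem keyInj
    (hmin : ∀ A : Set M, A.Nonempty → IsClosed A →
      (∀ (g : G), ∀ x ∈ A, g • x ∈ A) → A = Set.univ)
    (huniv : ∀ (Y : Type v) [TopologicalSpace Y] [CompactSpace Y] [T2Space Y]
      [MulAction G Y] [ContinuousSMul G Y], Nonempty Y →
      ∃ f : M → Y, Continuous f ∧ ∀ (g : G) (x : M), f (g • x) = g • f x)
    (φ : M → M) (hφc : Continuous φ) (hφe : ∀ (g : G) (x : M), φ (g • x) = g • φ x) :
    Function.Injective φ := by
  classical
  -- the translations
  set T : G → (M → M) := fun g x => g • x with hTdef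
  -- the Ellis semigroup
  set E : Set (M → M) := closure (Set.range T) with hEdef
  have hTE : ∀ g : G, T g ∈ E := fun g => subset_closure ⟨g, rfl⟩
  have hEclosed : IsClosed E := isClosed_closure
  have hEcompact : IsCompact E := hEclosed.isCompact
  have hEne : E.Nonempty := ⟨T 1, hTE 1⟩
  -- continuity of right translations
  have hρ : ∀ q : M → M, Continuous fun p : M → M => p ∘ q := fun q =>
    continuous_pi fun x => continuous_apply (q x)
  -- composing with a translation on the left stays in `E`
  have hTcomp : ∀ (g : G), ∀ p ∈ E, T g ∘ p ∈ E := by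
    intro g p hp
    have hc : Continuous fun p : M → M => T g ∘ p :=
      continuous_pi fun x => (continuous_apply x).const_smul g
    have himg : (fun p : M → M => T g ∘ p) '' Set.range T ⊆ E := by
      rintro _ ⟨_, ⟨h, rfl⟩, rfl⟩
      show T g ∘ T h ∈ E
      have : T g ∘ T h = T (g * h) := by
        funext x; exact (mul_smul g h x).symm
      rw [this]; exact hTE _
    exact (closure_minimal himg hEclosed)
      (image_closure_subset_closure_image hc ⟨p, hp, rfl⟩)
  -- `E` is closed under composition
  have hEmul : ∀ p ∈ E, ∀ q ∈ E, p ∘ q ∈ E := by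
    intro p hp q hq
    have himg : (fun p : M → M => p ∘ q) '' Set.range T ⊆ E := by
      rintro _ ⟨_, ⟨g, rfl⟩, rfl⟩
      exact hTcomp g q hq
    exact (closure_minimal himg hEclosed)
      (image_closure_subset_closure_image (hρ q) ⟨p, hp, rfl⟩)
  -- closed left ideals of `E`
  set S : Set (Set (M → M)) :=
    {A | A.Nonempty ∧ IsClosed A ∧ A ⊆ E ∧ ∀ p ∈ E, ∀ q ∈ A, p ∘ q ∈ A} with hSdef
  have hES : E ∈ S := ⟨hEne, hEclosed, le_refl E, hEmul⟩
  -- a minimal closed left ideal exists by Zorn's lemma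
  have hchaincond : ∀ c ⊆ S, IsChain (· ⊆ ·) c → c.Nonempty →
      ∃ lb ∈ S, ∀ s ∈ c, lb ⊆ s := by
    intro c hcS hchain hcne
    refine ⟨⋂₀ c, ⟨?_, ?_, ?_, ?_⟩, fun s hs => Set.sInter_subset_of_mem hs⟩
    · haveI : Nonempty c := hcne.to_subtype
      refine IsCompact.nonempty_sInter_of_directed_nonempty_isCompact_isClosed ?_
        (fun U hU => (hcS hU).1) (fun U hU => ((hcS hU).2.1).isCompact)
        (fun U hU => (hcS hU).2.1)
      intro x hx y hy
      rcases hchain.total hx hy with h | h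
      · exact ⟨x, hx, subset_rfl, h⟩
      · exact ⟨y, hy, h, subset_rfl⟩
    · exact isClosed_sInter fun A hA => (hcS hA).2.1
    · obtain ⟨A₀, hA₀⟩ := hcne
      exact (Set.sInter_subset_of_mem hA₀).trans (hcS hA₀).2.2.1
    · intro p hp q hq
      exact Set.mem_sInter.2 fun A hA =>
        (hcS hA).2.2.2 p hp q (Set.mem_sInter.1 hq A hA)
  obtain ⟨I, -, hIS, hImin⟩ : ∃ I, I ⊆ E ∧ Minimal (· ∈ S) I :=
    zorn_superset_nonempty S hchaincond E hES
  obtain ⟨hIne, hIclosed, hIE, hIideal⟩ := hIS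
  have hIcompact : IsCompact I := hIclosed.isCompact
  -- minimality of `I` in usable form
  have hminI : ∀ A : Set (M → M), A.Nonempty → IsClosed A → A ⊆ I →
      (∀ p ∈ E, ∀ q ∈ A, p ∘ q ∈ A) → A = I := by
    intro A hAne hAcl hAI hAideal
    exact subset_antisymm hAI (hImin ⟨hAne, hAcl, hAI.trans hIE, hAideal⟩ hAI)
  -- `E ∘ q = I` for every `q ∈ I`
  have hEq : ∀ q ∈ I, (fun p : M → M => p ∘ q) '' E = I := by
    intro q hq
    refine hminI _ (hEne.image _) ((hEcompact.image (hρ q)).isClosed) ?_ ?_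
    · rintro _ ⟨p, hp, rfl⟩; exact hIideal p hp q hq
    · rintro p hp _ ⟨p', hp', rfl⟩
      exact ⟨p ∘ p', hEmul p hp p' hp', rfl⟩
  -- an idempotent in `I` (Ellis–Numakura)
  letI : Semigroup (M → M) :=
    { mul := fun p q => p ∘ q
      mul_assoc := fun _ _ _ => rfl }
  obtain ⟨u, huI, huu⟩ := exists_idempotent_in_compact_subsemigroup hρ I hIne hIcompact
    (fun x hx y hy => hIideal x (hIE hx) y hy)
  have huu' : u ∘ u = u := huu
  -- `u` is a right identity on `I`
  have hrid : ∀ p ∈ I, p ∘ u = p := by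
    intro p hp
    have : p ∈ (fun p : M → M => p ∘ u) '' E := by rw [hEq u huI]; exact hp
    obtain ⟨p', _, rfl⟩ := this
    show (p' ∘ u) ∘ u = p' ∘ u
    calc (p' ∘ u) ∘ u = p' ∘ (u ∘ u) := rfl
      _ = p' ∘ u := by rw [huu']
  -- `I` as a compact Hausdorff `G`-space
  have hsmul_eq : ∀ (g : G) (p : M → M), g • p = T g ∘ p := fun g p => rfl
  have hIinv : ∀ (g : G) (q : M → M), q ∈ I → g • q ∈ I := by
    intro g q hq
    rw [hsmul_eq]
    exact hIideal (T g) (hTE g) q hq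
  letI : MulAction G I :=
    { smul := fun g q => ⟨g • q.1, hIinv g q.1 q.2⟩
      one_smul := fun q => Subtype.ext (one_smul G q.1)
      mul_smul := fun g h q => Subtype.ext (mul_smul g h q.1) }
  have hsmulI : ∀ (g : G) (q : I), (g • q).1 = g • q.1 := fun g q => rfl
  letI : ContinuousSMul G I :=
    { continuous_smul := by
        apply Continuous.subtype_mk
        exact continuous_smul.comp
          (continuous_fst.prodMk (continuous_subtype_val.comp continuous_snd)) }
  haveI : CompactSpace I := isCompact_iff_compactSpace.mp hIcompact
  haveI : Nonempty I := ⟨⟨u, huI⟩⟩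
  -- every continuous equivariant self-map of `I` is injective
  have endo_inj : ∀ ρ : I → I, Continuous ρ →
      (∀ (g : G) (q : I), ρ (g • q) = g • ρ q) → Function.Injective ρ := by
    intro ρ hρc hρe
    -- ρ commutes with right composition by elements of `E`
    have hcomm : ∀ (r : I) (p : M → M) (hp : p ∈ E),
        (ρ ⟨p ∘ r.1, hIideal p hp r.1 r.2⟩).1 = p ∘ (ρ r).1 := by
      intro r p hp
      let f₁ : E → M → M := fun p => (ρ ⟨p.1 ∘ r.1, hIideal p.1 p.2 r.1 r.2⟩).1
      let f₂ : E → M → M := fun p => p.1 ∘ (ρ r).1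
      have hf₁ : Continuous f₁ := continuous_subtype_val.comp
        (hρc.comp (Continuous.subtype_mk ((hρ r.1).comp continuous_subtype_val) _))
      have hf₂ : Continuous f₂ := (hρ (ρ r).1).comp continuous_subtype_val
      have hdense : Dense {p : E | p.1 ∈ Set.range T} := by
        intro p
        rw [closure_subtype]
        have : Subtype.val '' {p : E | p.1 ∈ Set.range T} = Set.range T := by
          ext q
          constructor
          · rintro ⟨q', hq', rfl⟩; exact hq'
          · intro hq; exact ⟨⟨q, subset_closure hq⟩, hq, rfl⟩
        rw [this]
        exact p.2
      have heq : f₁ = f₂ := by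
        refine Continuous.ext_on hdense hf₁ hf₂ ?_
        rintro ⟨p, hpE⟩ ⟨g, rfl⟩
        show (ρ ⟨T g ∘ r.1, _⟩).1 = T g ∘ (ρ r).1
        have h1 : (⟨T g ∘ r.1, hIideal (T g) (hTE g) r.1 r.2⟩ : I) = g • r :=
          Subtype.ext rfl
        rw [h1, hρe g r]
        rfl
      exact congrFun heq ⟨p, hp⟩
    set v : I := ρ ⟨u, huI⟩ with hvdef
    have hρv : ∀ q : I, (ρ q).1 = q.1 ∘ v.1 := by
      intro q
      have h1 : (⟨q.1 ∘ u, hIideal q.1 (hIE q.2) u huI⟩ : I) = q :=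
        Subtype.ext (hrid q.1 q.2)
      have := hcomm ⟨u, huI⟩ q.1 (hIE q.2)
      rw [h1] at this
      exact this
    -- `I ∘ v = I` by minimality
    have hIv : (fun q : M → M => q ∘ v.1) '' I = I := by
      refine hminI _ (hIne.image _) ((hIcompact.image (hρ v.1)).isClosed) ?_ ?_
      · rintro _ ⟨q, hq, rfl⟩
        exact hIideal q (hIE hq) v.1 v.2
      · rintro p hp _ ⟨q, hq, rfl⟩
        exact ⟨p ∘ q, hIideal p hp q hq, rfl⟩
    obtain ⟨w, hwI, hwv⟩ : ∃ w ∈ I, w ∘ v.1 = u := by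
      have : u ∈ (fun q : M → M => q ∘ v.1) '' I := by rw [hIv]; exact huI
      obtain ⟨w, hw, hw'⟩ := this
      exact ⟨w, hw, hw'⟩
    set s : M → M := v.1 ∘ w with hsdef
    have hsI : s ∈ I := hIideal v.1 (hIE v.2) w hwI
    have hss : s ∘ s = s := by
      show (v.1 ∘ w) ∘ (v.1 ∘ w) = v.1 ∘ w
      calc (v.1 ∘ w) ∘ (v.1 ∘ w) = (v.1 ∘ (w ∘ v.1)) ∘ w := rfl
        _ = (v.1 ∘ u) ∘ w := by rw [hwv]
        _ = v.1 ∘ w := by rw [hrid v.1 v.2]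
    -- any idempotent of `I` is a right identity on `I`
    have hsid : ∀ p ∈ I, p ∘ s = p := by
      intro p hp
      have : p ∈ (fun p : M → M => p ∘ s) '' E := by rw [hEq s hsI]; exact hp
      obtain ⟨p', _, rfl⟩ := this
      show (p' ∘ s) ∘ s = p' ∘ s
      calc (p' ∘ s) ∘ s = p' ∘ (s ∘ s) := rfl
        _ = p' ∘ s := by rw [hss]
    -- injectivity
    intro q q' h
    have h1 : q.1 ∘ v.1 = q'.1 ∘ v.1 := by
      rw [← hρv q, ← hρv q', h]
    apply Subtype.ext
    calc q.1 = q.1 ∘ s := (hsid q.1 q.2).symm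
      _ = (q.1 ∘ v.1) ∘ w := rfl
      _ = (q'.1 ∘ v.1) ∘ w := by rw [h1]
      _ = q'.1 ∘ s := rfl
      _ = q'.1 := hsid q'.1 q'.2
  -- evaluation map `ξ : I → M`
  obtain ⟨x₀⟩ := ‹Nonempty M›
  set ξ : I → M := fun q => q.1 x₀ with hξdef
  have hξc : Continuous ξ := (continuous_apply x₀).comp continuous_subtype_val
  have hξe : ∀ (g : G) (q : I), ξ (g • q) = g • ξ q := fun g q => rfl
  obtain ⟨χ, hχc, hχe⟩ := huniv I ⟨⟨u, huI⟩⟩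
  -- `χ ∘ φ ∘ ξ` is an endomorphism of `I`, hence injective
  have hinj : Function.Injective fun q : I => χ (φ (ξ q)) := by
    refine endo_inj _ (hχc.comp (hφc.comp hξc)) ?_
    intro g q
    show χ (φ (ξ (g • q))) = g • χ (φ (ξ q))
    rw [hξe g q, hφe g (ξ q), hχe g (φ (ξ q))]
  -- `ξ` is surjective by minimality of `M`
  have hξsurj : Function.Surjective ξ := by
    have hr : Set.range ξ = Set.univ := by
      refine hmin _ ⟨ξ ⟨u, huI⟩, Set.mem_range_self _⟩ (isCompact_range hξc).isClosed ?_
      rintro g _ ⟨q, rfl⟩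
      exact ⟨g • q, (hξe g q)⟩
    exact Set.range_eq_univ.mp hr
  -- conclude
  intro a b hab
  obtain ⟨qa, rfl⟩ := hξsurj a
  obtain ⟨qb, rfl⟩ := hξsurj b
  have : (fun q : I => χ (φ (ξ q))) qa = (fun q : I => χ (φ (ξ q))) qb := by
    simp only []
    rw [hab]
  exact congrArg ξ (hinj this)

end Aux

/-- Any two universal minimal compact `G`-spaces are isomorphic via a `G`-equivariant
homeomorphism. -/
theorem statement8 (G : Type u) [Group G] [TopologicalSpace G] [IsTopologicalGroup G]
    (M : Type v) [TopologicalSpace M] [CompactSpace M] [T2Space M] [Nonempty M]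
    [MulAction G M] [ContinuousSMul G M]
    (M' : Type v) [TopologicalSpace M'] [CompactSpace M'] [T2Space M'] [Nonempty M']
    [MulAction G M'] [ContinuousSMul G M']
    (hmin : ∀ A : Set M, A.Nonempty → IsClosed A →
      (∀ (g : G), ∀ x ∈ A, g • x ∈ A) → A = Set.univ)
    (huniv : ∀ (Y : Type v) [TopologicalSpace Y] [CompactSpace Y] [T2Space Y]
      [MulAction G Y] [ContinuousSMul G Y], Nonempty Y →
      ∃ f : M → Y, Continuous f ∧ ∀ (g : G) (x : M), f (g • x) = g • f x)
    (hmin' : ∀ A : Set M', A.Nonempty → IsClosed A →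
      (∀ (g : G), ∀ x ∈ A, g • x ∈ A) → A = Set.univ)
    (huniv' : ∀ (Y : Type v) [TopologicalSpace Y] [CompactSpace Y] [T2Space Y]
      [MulAction G Y] [ContinuousSMul G Y], Nonempty Y →
      ∃ f : M' → Y, Continuous f ∧ ∀ (g : G) (x : M'), f (g • x) = g • f x) :
    ∃ e : M ≃ₜ M', ∀ (g : G) (x : M), e (g • x) = g • e x := by
  obtain ⟨f, hfc, hfe⟩ := huniv M' inferInstance
  obtain ⟨f', hf'c, hf'e⟩ := huniv' M inferInstance
  have hcomp : Function.Injective (f' ∘ f) := by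
    refine keyInj hmin huniv (f' ∘ f) (hf'c.comp hfc) ?_
    intro g x
    show f' (f (g • x)) = g • f' (f x)
    rw [hfe, hf'e]
  have hinj : Function.Injective f := fun a b h => hcomp (by
    show f' (f a) = f' (f b)
    rw [h])
  have hsurj : Function.Surjective f := by
    have hr : Set.range f = Set.univ := by
      refine hmin' _ (Set.range_nonempty f) (isCompact_range hfc).isClosed ?_
      rintro g _ ⟨x, rfl⟩
      exact ⟨g • x, hfe g x⟩
    exact Set.range_eq_univ.mp hr
  let e : M ≃ M' := Equiv.ofBijective f ⟨hinj, hsurj⟩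
  exact ⟨Continuous.homeoOfEquivCompactToT2 (f := e) hfc, fun g x => hfe g x⟩
end

section
/- Let G be a topological group, let (X, e) be a greatest ambit for G, and for each y ∈ X let r_y : X → X denote the unique G-map with r_y(e) = y. Let A be a nonempty closed subset of X. Then A is G-invariant (g·a ∈ A for all g ∈ G, a ∈ A) if and only if A is a left ideal for the multiplication x·y := r_y(x), i.e. r_a(x) ∈ A for all a ∈ A and x ∈ X. -/
universe u v

open scoped Pointwise

theorem aux_dense_orbit (G : Type u) [Group G] [TopologicalSpace G] [IsTopologicalGroup G]
    (X : Type v) [TopologicalSpace X] [CompactSpace X] [T2Space X] [Nonempty X]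
    [MulAction G X] [ContinuousSMul G X] (e : X)
    (hambit : ∀ (Y : Type v) [TopologicalSpace Y] [CompactSpace Y] [T2Space Y]
      [MulAction G Y] [ContinuousSMul G Y] (y : Y),
      ∃! f : X → Y, Continuous f ∧ (∀ (g : G) (x : X), f (g • x) = g • f x) ∧ f e = y) :
    Dense (MulAction.orbit G e) := by
  set C : Set X := closure (MulAction.orbit G e) with hC
  have hCc : IsClosed C := isClosed_closure
  have hsmul : ∀ (g : G), ∀ x ∈ C, g • x ∈ C := by
    intro g x hx
    have : g • C = closure (g • MulAction.orbit G e) := (closure_smul g _).symm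
    have hsub : g • MulAction.orbit G e ⊆ MulAction.orbit G e := by
      rintro _ ⟨y, ⟨h, rfl⟩, rfl⟩
      exact ⟨g * h, by simp [mul_smul]⟩
    have : g • x ∈ closure (g • MulAction.orbit G e) := by
      rw [← this]; exact Set.smul_mem_smul_set hx
    exact closure_mono hsub this
  -- make C into a compact Hausdorff G-space
  letI : MulAction G C :=
    { smul := fun g x => ⟨g • (x : X), hsmul g x x.2⟩
      one_smul := fun x => Subtype.ext (one_smul G (x : X))
      mul_smul := fun g h x => Subtype.ext (mul_smul g h (x : X)) }
  have hsmul_def : ∀ (g : G) (x : C), ((g • x : C) : X) = g • (x : X) := fun _ _ => rfl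
  haveI : CompactSpace C := isCompact_iff_compactSpace.mp (hCc.isCompact)
  haveI : ContinuousSMul G C := by
    refine ⟨?_⟩
    apply Continuous.subtype_mk
    exact continuous_smul.comp (continuous_fst.prodMk (continuous_subtype_val.comp continuous_snd))
  have heC : e ∈ C := subset_closure (MulAction.mem_orbit_self e)
  obtain ⟨f, ⟨hfc, hfe, hfee⟩, _⟩ := hambit C ⟨e, heC⟩
  obtain ⟨i, _, hiu⟩ := hambit X e
  have h1 : ((fun x => ((f x : X))) : X → X) = id := by
    have p1 : Continuous (fun x => ((f x : X))) := continuous_subtype_val.comp hfc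
    have p2 : ∀ (g : G) (x : X), ((f (g • x) : X)) = g • ((f x : X)) := by
      intro g x; rw [hfe g x]; rfl
    have p3 : ((f e : X)) = e := by rw [hfee]
    rw [hiu (fun x => (f x : X)) ⟨p1, p2, p3⟩, hiu id ⟨continuous_id, fun _ _ => rfl, rfl⟩]
  intro x
  have : (f x : X) ∈ C := (f x).2
  rw [show (f x : X) = x from congrFun h1 x] at this
  exact this

/-- A nonempty closed subset of the greatest ambit `(X, e)` is `G`-invariant if and only if
it is a left ideal for the multiplication `x · y := r_y x`. -/
theorem statement12 (G : Type u) [Group G] [TopologicalSpace G] [IsTopologicalGroup G]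
    (X : Type v) [TopologicalSpace X] [CompactSpace X] [T2Space X] [Nonempty X]
    [MulAction G X] [ContinuousSMul G X] (e : X)
    (hambit : ∀ (Y : Type v) [TopologicalSpace Y] [CompactSpace Y] [T2Space Y]
      [MulAction G Y] [ContinuousSMul G Y] (y : Y),
      ∃! f : X → Y, Continuous f ∧ (∀ (g : G) (x : X), f (g • x) = g • f x) ∧ f e = y)
    (r : X → X → X)
    (hr : ∀ y : X, Continuous (r y) ∧
      (∀ (g : G) (x : X), r y (g • x) = g • r y x) ∧ r y e = y)
    (A : Set X) (hA : A.Nonempty) (hAc : IsClosed A) :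
    (∀ (g : G), ∀ a ∈ A, g • a ∈ A) ↔ (∀ a ∈ A, ∀ x : X, r a x ∈ A) := by
  constructor
  · intro hinv a ha x
    have hdense := aux_dense_orbit G X e hambit
    have hS : IsClosed {z | r a z ∈ A} := hAc.preimage (hr a).1
    have hsub : closure (MulAction.orbit G e) ⊆ {z | r a z ∈ A} := by
      apply closure_minimal _ hS
      rintro _ ⟨g, rfl⟩
      show r a (g • e) ∈ A
      rw [(hr a).2.1, (hr a).2.2]
      exact hinv g a ha
    exact hsub (hdense x)
  · intro hid g a ha
    have := hid a ha (g • e)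
    rwa [(hr a).2.1, (hr a).2.2] at this
end

section
/- Let G be a topological group, let (X, e) be a greatest ambit for G, and for each y ∈ X let r_y : X → X denote the unique G-map with r_y(e) = y. Let M be a nonempty closed G-invariant subset of X that is minimal (has no proper nonempty closed G-invariant subset). Then there exists p ∈ M such that r_p(p) = p (p is an idempotent), the image r_p(X) equals M, and r_p(x) = x for every x ∈ M; in particular r_p is a G-equivariant retraction of X onto M. -/
universe u v

/-- If `M` is a minimal closed `G`-invariant subset of the greatest ambit `(X, e)`, then
there is an idempotent `p ∈ M` such that `r_p` is a `G`-equivariant retraction of `X`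
onto `M`. -/
theorem statement13 (G : Type u) [Group G] [TopologicalSpace G] [IsTopologicalGroup G]
    (X : Type v) [TopologicalSpace X] [CompactSpace X] [T2Space X] [Nonempty X]
    [MulAction G X] [ContinuousSMul G X] (e : X)
    (hambit : ∀ (Y : Type v) [TopologicalSpace Y] [CompactSpace Y] [T2Space Y]
      [MulAction G Y] [ContinuousSMul G Y] (y : Y),
      ∃! f : X → Y, Continuous f ∧ (∀ (g : G) (x : X), f (g • x) = g • f x) ∧ f e = y)
    (r : X → X → X)
    (hr : ∀ y : X, Continuous (r y) ∧
      (∀ (g : G) (x : X), r y (g • x) = g • r y x) ∧ r y e = y)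
    (M : Set X) (hMne : M.Nonempty) (hMc : IsClosed M)
    (hMinv : ∀ (g : G), ∀ x ∈ M, g • x ∈ M)
    (hMmin : ∀ Z : Set X, Z ⊆ M → Z.Nonempty → IsClosed Z →
      (∀ (g : G), ∀ x ∈ Z, g • x ∈ Z) → Z = M) :
    ∃ p ∈ M, r p p = p ∧ Set.range (r p) = M ∧ ∀ x ∈ M, r p x = x := by
  -- uniqueness of G-maps X → X with given value at e
  have huniq : ∀ (f₁ f₂ : X → X), Continuous f₁ → (∀ (g : G) (x : X), f₁ (g • x) = g • f₁ x) →
      Continuous f₂ → (∀ (g : G) (x : X), f₂ (g • x) = g • f₂ x) → f₁ e = f₂ e → f₁ = f₂ := by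
    intro f₁ f₂ h1c h1e h2c h2e heq
    obtain ⟨f, _, huf⟩ := hambit X (f₁ e)
    rw [huf f₁ ⟨h1c, h1e, rfl⟩, huf f₂ ⟨h2c, h2e, heq.symm⟩]
  -- composition law
  have hcomp : ∀ y z : X, r y ∘ r z = r (r y z) := by
    intro y z
    apply huniq
    · exact (hr y).1.comp (hr z).1
    · intro g x
      simp only [Function.comp_apply, (hr z).2.1, (hr y).2.1]
    · exact (hr (r y z)).1
    · exact (hr (r y z)).2.1
    · simp [Function.comp_apply, (hr z).2.2, (hr (r y z)).2.2]
  -- M as a compact Hausdorff G-space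
  haveI : CompactSpace M := isCompact_iff_compactSpace.mp hMc.isCompact
  letI : MulAction G M :=
    { smul := fun g x => ⟨g • (x : X), hMinv g x x.2⟩
      one_smul := fun x => Subtype.ext (one_smul G (x : X))
      mul_smul := fun g h x => Subtype.ext (mul_smul g h (x : X)) }
  haveI : ContinuousSMul G M :=
    ⟨by
      apply Continuous.subtype_mk
      exact continuous_smul.comp (continuous_fst.prodMk
        (continuous_subtype_val.comp continuous_snd))⟩
  -- for y ∈ M, range (r y) ⊆ M
  have hsub : ∀ y ∈ M, Set.range (r y) ⊆ M := by
    intro y hy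
    obtain ⟨f, ⟨hfc, hfe, hfv⟩, _⟩ := hambit M ⟨y, hy⟩
    have : r y = fun x => (f x : X) := by
      apply huniq
      · exact (hr y).1
      · exact (hr y).2.1
      · exact continuous_subtype_val.comp hfc
      · intro g x; simp only [hfe]; rfl
      · rw [(hr y).2.2, hfv]
    rw [this]
    rintro _ ⟨x, rfl⟩
    exact (f x).2
  -- for y ∈ M, range (r y) = M
  have hrange : ∀ y ∈ M, Set.range (r y) = M := by
    intro y hy
    apply hMmin
    · exact hsub y hy
    · exact ⟨y, e, (hr y).2.2⟩
    · exact (isCompact_range (hr y).1).isClosed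
    · rintro g _ ⟨x, rfl⟩
      exact ⟨g • x, (hr y).2.1 g x⟩
  -- closure under multiplication
  have hmulM : ∀ x ∈ M, ∀ y : X, r x y ∈ M := by
    intro x hx y
    exact (hrange x hx) ▸ ⟨y, rfl⟩
  -- Ellis–Numakura: find idempotent in M via Zorn on closed subsemigroups
  set S : Set (Set X) := {T | T ⊆ M ∧ T.Nonempty ∧ IsClosed T ∧
    ∀ x ∈ T, ∀ y ∈ T, r x y ∈ T} with hS
  have hMS : M ∈ S := ⟨subset_rfl, hMne, hMc, fun x hx y _ => hmulM x hx y⟩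
  obtain ⟨T, -, hTS, hTmin⟩ := zorn_superset_nonempty S (by
    intro c hcS hchain hcne
    refine ⟨⋂₀ c, ⟨?_, ?_, ?_, ?_⟩, fun s hs => Set.sInter_subset_of_mem hs⟩
    · obtain ⟨s, hs⟩ := hcne
      exact (Set.sInter_subset_of_mem hs).trans (hcS hs).1
    · haveI : Nonempty c := hcne.to_subtype
      apply IsCompact.nonempty_sInter_of_directed_nonempty_isCompact_isClosed
      · intro U hU V hV
        rcases hchain.total hU hV with h | h
        · exact ⟨U, hU, subset_rfl, h⟩
        · exact ⟨V, hV, h, subset_rfl⟩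
      · exact fun U hU => (hcS hU).2.1
      · exact fun U hU => (hcS hU).2.2.1.isCompact
      · exact fun U hU => (hcS hU).2.2.1
    · exact isClosed_sInter fun U hU => (hcS hU).2.2.1
    · intro x hx y hy U hU
      exact (hcS hU).2.2.2 x (hx U hU) y (hy U hU)) M hMS
  obtain ⟨hTM, hTne, hTcl, hTmul⟩ := hTS
  obtain ⟨p, hp⟩ := hTne
  -- r p '' T = T
  have himg : r p '' T = T := by
    have hmem : r p '' T ∈ S := by
      refine ⟨?_, ⟨r p p, Set.mem_image_of_mem _ hp⟩, ?_, ?_⟩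
      · rintro _ ⟨t, ht, rfl⟩; exact hmulM p (hTM hp) t
      · exact ((hTcl.isCompact.image (hr p).1)).isClosed
      · rintro _ ⟨t₁, ht₁, rfl⟩ _ ⟨t₂, ht₂, rfl⟩
        have : r (r p t₁) (r p t₂) = r p (r t₁ (r p t₂)) := by
          have := congrFun (hcomp p t₁) (r p t₂)
          simpa [Function.comp] using this.symm
        rw [this]
        exact ⟨r t₁ (r p t₂), hTmul t₁ ht₁ _ (hTmul p hp t₂ ht₂), rfl⟩
    have hsub : r p '' T ⊆ T := by rintro _ ⟨t, ht, rfl⟩; exact hTmul p hp t ht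
    exact subset_antisymm hsub (hTmin hmem hsub)
  -- get q with r p q = p, then shrink
  have hqex : ∃ q ∈ T, r p q = p := by
    have : p ∈ r p '' T := Set.mem_of_mem_of_subset hp himg.symm.subset
    obtain ⟨q, hq, hq'⟩ := this
    exact ⟨q, hq, hq'⟩
  have hT' : T ∩ (r p ⁻¹' {p}) = T := by
    have hmem : T ∩ (r p ⁻¹' {p}) ∈ S := by
      refine ⟨(Set.inter_subset_left).trans hTM, ?_, ?_, ?_⟩
      · obtain ⟨q, hq, hq'⟩ := hqex
        exact ⟨q, hq, hq'⟩
      · exact hTcl.inter (IsClosed.preimage (hr p).1 isClosed_singleton)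
      · rintro x ⟨hx, hx'⟩ y ⟨hy, hy'⟩
        refine ⟨hTmul x hx y hy, ?_⟩
        have : r p (r x y) = r (r p x) y := by
          simpa [Function.comp] using congrFun (hcomp p x) y
        simp only [Set.mem_preimage, Set.mem_singleton_iff] at hx' hy' ⊢
        rw [this, hx', hy']
    exact subset_antisymm Set.inter_subset_left (hTmin hmem Set.inter_subset_left)
  have hidem : r p p = p := by
    have h2 : T ⊆ T ∩ (r p ⁻¹' {p}) := hT'.symm.subset
    simpa using (h2 hp).2
  have hpM : p ∈ M := hTM hp
  refine ⟨p, hpM, hidem, hrange p hpM, ?_⟩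
  intro x hx
  obtain ⟨z, rfl⟩ := (hrange p hpM).symm ▸ hx
  have : r p (r p z) = r (r p p) z := by
    simpa [Function.comp] using congrFun (hcomp p p) z
  rw [this, hidem]
end

section
/- Let G be a topological group, let (X, e) be a greatest ambit for G, and for each y ∈ X let r_y : X → X denote the unique G-map with r_y(e) = y. Let M be a nonempty closed G-invariant subset of X that is minimal (has no proper nonempty closed G-invariant subset). Then every G-map f : M → M has the form f = r_y restricted to M for some y ∈ M; that is, there exists y ∈ M such that f(x) = r_y(x) for all x ∈ M. -/
universe u v

/-- Every `G`-self-map of a minimal closed `G`-invariant subset `M` of the greatest ambit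
`(X, e)` is the restriction of a right translation `r_y` with `y ∈ M`. -/
theorem statement14 (G : Type u) [Group G] [TopologicalSpace G] [IsTopologicalGroup G]
    (X : Type v) [TopologicalSpace X] [CompactSpace X] [T2Space X] [Nonempty X]
    [MulAction G X] [ContinuousSMul G X] (e : X)
    (hambit : ∀ (Y : Type v) [TopologicalSpace Y] [CompactSpace Y] [T2Space Y]
      [MulAction G Y] [ContinuousSMul G Y] (y : Y),
      ∃! f : X → Y, Continuous f ∧ (∀ (g : G) (x : X), f (g • x) = g • f x) ∧ f e = y)
    (r : X → X → X)
    (hr : ∀ y : X, Continuous (r y) ∧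
      (∀ (g : G) (x : X), r y (g • x) = g • r y x) ∧ r y e = y)
    (M : Set X) (hMne : M.Nonempty) (hMc : IsClosed M)
    (hMinv : ∀ (g : G), ∀ x ∈ M, g • x ∈ M)
    (hMmin : ∀ Z : Set X, Z ⊆ M → Z.Nonempty → IsClosed Z →
      (∀ (g : G), ∀ x ∈ Z, g • x ∈ Z) → Z = M)
    (f : M → M) (hfc : Continuous f)
    (hfe : ∀ (g : G) (x : M), f ⟨g • (x : X), hMinv g x x.2⟩ = ⟨g • (f x : X), hMinv g _ (f x).2⟩) :
    ∃ y ∈ M, ∀ x : M, (f x : X) = r y (x : X) := by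
  classical
  -- uniqueness: any continuous G-map `X → X` sending `e` to `y` is `r y`
  have huniq : ∀ h : X → X, Continuous h → (∀ (g : G) (x : X), h (g • x) = g • h x) →
      ∀ y : X, h e = y → h = r y := by
    intro h hc heq y hy
    obtain ⟨f₀, _, hu⟩ := hambit X y
    have h1 : h = f₀ := hu h ⟨hc, heq, hy⟩
    have h2 : r y = f₀ := hu (r y) ⟨(hr y).1, (hr y).2.1, (hr y).2.2⟩
    rw [h1, h2]
  -- density of the orbit of e
  have hdense : ∀ x : X, x ∈ closure (MulAction.orbit G e) := by
    set C : Set X := closure (MulAction.orbit G e) with hC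
    have hCinv : ∀ (g : G), ∀ x ∈ C, g • x ∈ C := by
      intro g x hx
      have hmt : Set.MapsTo (fun z : X => g • z) (MulAction.orbit G e) (MulAction.orbit G e) := by
        rintro z ⟨g', rfl⟩
        exact ⟨g * g', by simp [mul_smul]⟩
      exact hmt.closure (continuous_const_smul g) hx
    letI : MulAction G C :=
      { smul := fun g x => ⟨g • (x : X), hCinv g x x.2⟩
        one_smul := fun x => Subtype.ext (one_smul G (x : X))
        mul_smul := fun g g' x => Subtype.ext (mul_smul g g' (x : X)) }
    haveI : CompactSpace C := isCompact_iff_compactSpace.mp (isClosed_closure.isCompact)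
    haveI : ContinuousSMul G C :=
      ⟨(continuous_fst.smul (continuous_subtype_val.comp continuous_snd)).subtype_mk _⟩
    have heC : e ∈ C := subset_closure (MulAction.mem_orbit_self e)
    obtain ⟨φ, ⟨φc, φeq, φe⟩, _⟩ := hambit C ⟨e, heC⟩
    have hkey : (Subtype.val ∘ φ) = id := by
      obtain ⟨f₀, _, hu⟩ := hambit X e
      have h1 : (Subtype.val ∘ φ) = f₀ := by
        refine hu _ ⟨continuous_subtype_val.comp φc, ?_, ?_⟩
        · intro g x
          show ((φ (g • x) : C) : X) = g • ((φ x : C) : X)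
          rw [φeq]; rfl
        · show ((φ e : C) : X) = e
          rw [φe]
      have h2 : (id : X → X) = f₀ :=
        hu _ ⟨continuous_id, fun g x => rfl, rfl⟩
      rw [h1, h2]
    intro x
    have : (Subtype.val ∘ φ) x = x := by rw [hkey]; rfl
    rw [← this]
    exact (φ x).2
  -- for y in a closed invariant set S containing y, r y maps X into S
  have hinto : ∀ (S : Set X), IsClosed S → (∀ (g : G), ∀ x ∈ S, g • x ∈ S) →
      ∀ y ∈ S, ∀ x : X, r y x ∈ S := by
    intro S hSc hSinv y hy x
    have hsub : closure (MulAction.orbit G e) ⊆ (r y) ⁻¹' S := by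
      apply closure_minimal
      · rintro z ⟨g, rfl⟩
        show r y (g • e) ∈ S
        rw [(hr y).2.1, (hr y).2.2]
        exact hSinv g y hy
      · exact hSc.preimage (hr y).1
    exact hsub (hdense x)
  -- associativity of x * y := r y x
  have hassoc : ∀ x y z : X, r z (r y x) = r (r z y) x := by
    intro x y z
    have h : (fun w => r z (r y w)) = r (r z y) := by
      apply huniq
      · exact (hr z).1.comp (hr y).1
      · intro g w
        show r z (r y (g • w)) = g • r z (r y w)
        rw [(hr y).2.1, (hr z).2.1]
      · show r z (r y e) = r z y
        rw [(hr y).2.2]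
    exact congrFun h x
  -- semigroup structure: x * y := r y x
  letI : Semigroup X :=
    { mul := fun x y => r y x
      mul_assoc := fun x y z => hassoc x y z }
  -- idempotent in M
  obtain ⟨u, huM, huu⟩ := exists_idempotent_in_compact_subsemigroup
    (M := X) (fun y => (hr y).1) M hMne hMc.isCompact
    (fun x _ y hy => hinto M hMc hMinv y hy x)
  have huu' : r u u = u := huu
  -- every p ∈ M satisfies r u p = p
  have hfix : ∀ p ∈ M, r u p = p := by
    have hrange : Set.range (r u) = M := by
      apply hMmin
      · rintro _ ⟨x, rfl⟩; exact hinto M hMc hMinv u huM x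
      · exact ⟨u, e, (hr u).2.2⟩
      · exact ((isCompact_range (hr u).1).isClosed)
      · rintro g _ ⟨x, rfl⟩
        exact ⟨g • x, (hr u).2.1 g x⟩
    intro p hp
    obtain ⟨x, rfl⟩ := hrange ▸ hp
    rw [hassoc, huu']
  -- the main map
  set h : X → X := fun x => ((f ⟨r u x, hinto M hMc hMinv u huM x⟩ : M) : X) with hh
  have hhc : Continuous h :=
    continuous_subtype_val.comp (hfc.comp (((hr u).1).subtype_mk _))
  have hheq : ∀ (g : G) (x : X), h (g • x) = g • h x := by
    intro g x
    have h1 : (⟨r u (g • x), hinto M hMc hMinv u huM (g • x)⟩ : M)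
        = ⟨g • r u x, hMinv g _ (hinto M hMc hMinv u huM x)⟩ :=
      Subtype.ext ((hr u).2.1 g x)
    show ((f _ : M) : X) = g • ((f _ : M) : X)
    rw [h1, hfe g ⟨r u x, hinto M hMc hMinv u huM x⟩]
  have hkey : h = r (h e) := huniq h hhc hheq (h e) rfl
  refine ⟨h e, (f _).2, ?_⟩
  intro x
  have h2 : (⟨r u (x : X), hinto M hMc hMinv u huM (x : X)⟩ : M) = x :=
    Subtype.ext (hfix x x.2)
  have h3 : h (x : X) = (f x : X) := congrArg (fun m : M => (f m : X)) h2
  rw [← hkey]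
  exact h3.symm
end

section
/- Let G be a topological group, let (X, e) be a greatest ambit for G, and let M be a nonempty closed G-invariant subset of X that is minimal (has no proper nonempty closed G-invariant subset). Then every G-map f : M → M is bijective. -/
universe u v

/-- If `S` is a closed `G`-invariant subset of the greatest ambit containing the base
point `e`, then `S` is everything. -/
theorem auxFull15 (G : Type u) [Group G] [TopologicalSpace G] [IsTopologicalGroup G]
    (X : Type v) [TopologicalSpace X] [CompactSpace X] [T2Space X] [Nonempty X]
    [MulAction G X] [ContinuousSMul G X] (e : X)
    (hambit : ∀ (Y : Type v) [TopologicalSpace Y] [CompactSpace Y] [T2Space Y]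
      [MulAction G Y] [ContinuousSMul G Y] (y : Y),
      ∃! f : X → Y, Continuous f ∧ (∀ (g : G) (x : X), f (g • x) = g • f x) ∧ f e = y)
    (S : Set X) (hSc : IsClosed S) (hSinv : ∀ g : G, ∀ x ∈ S, g • x ∈ S) (heS : e ∈ S) :
    ∀ x, x ∈ S := by
  letI : MulAction G S :=
    { smul := fun g x => ⟨g • (x : X), hSinv g x x.2⟩,
      one_smul := fun x => Subtype.ext (one_smul G (x : X)),
      mul_smul := fun g h x => Subtype.ext (mul_smul g h (x : X)) }
  haveI : CompactSpace S := isCompact_iff_compactSpace.mp hSc.isCompact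
  haveI : ContinuousSMul G S := ⟨by
    apply Continuous.subtype_mk
    exact continuous_smul.comp ((continuous_id.prodMap continuous_subtype_val))⟩
  obtain ⟨j, ⟨hjc, hjeq, hje⟩, -⟩ := hambit S ⟨e, heS⟩
  obtain ⟨k, -, hk⟩ := hambit X e
  have h1 : (fun x => (j x : X)) = k := by
    refine hk _ ⟨continuous_subtype_val.comp hjc, fun g x => ?_, ?_⟩
    · exact congrArg Subtype.val (hjeq g x)
    · exact congrArg Subtype.val hje
  have h2 : id = k := hk id ⟨continuous_id, fun _ _ => rfl, rfl⟩
  intro x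
  have : (j x : X) = x := by rw [congrFun h1 x, ← h2]; rfl
  rw [← this]; exact (j x).2

/-- Every `G`-self-map of a minimal closed `G`-invariant subset `M` of the greatest ambit
`(X, e)` is bijective. -/
theorem statement15 (G : Type u) [Group G] [TopologicalSpace G] [IsTopologicalGroup G]
    (X : Type v) [TopologicalSpace X] [CompactSpace X] [T2Space X] [Nonempty X]
    [MulAction G X] [ContinuousSMul G X] (e : X)
    (hambit : ∀ (Y : Type v) [TopologicalSpace Y] [CompactSpace Y] [T2Space Y]
      [MulAction G Y] [ContinuousSMul G Y] (y : Y),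
      ∃! f : X → Y, Continuous f ∧ (∀ (g : G) (x : X), f (g • x) = g • f x) ∧ f e = y)
    (M : Set X) (hMne : M.Nonempty) (hMc : IsClosed M)
    (hMinv : ∀ (g : G), ∀ x ∈ M, g • x ∈ M)
    (hMmin : ∀ Z : Set X, Z ⊆ M → Z.Nonempty → IsClosed Z →
      (∀ (g : G), ∀ x ∈ Z, g • x ∈ Z) → Z = M)
    (f : M → M) (hfc : Continuous f)
    (hfe : ∀ (g : G) (x : M), f ⟨g • (x : X), hMinv g x x.2⟩ = ⟨g • (f x : X), hMinv g _ (f x).2⟩) :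
    Function.Bijective f := by
  classical
  -- the Ellis semigroup structure: `R y` is the unique `G`-map with `R y e = y`;
  -- think of `R y x` as the product `x * y`.
  choose R hRc hReq hRe using fun y : X => (hambit X y).exists
  -- associativity
  have hassoc : ∀ x y z : X, R y (R x z) = R (R y x) z := by
    intro x y z
    have h1 : (fun z => R y (R x z)) = R (R y x) := by
      refine ((hambit X (R y x)).unique ?_ ⟨hRc _, hReq _, hRe _⟩)
      exact ⟨(hRc y).comp (hRc x), fun g w => by beta_reduce; rw [hReq x, hReq y], by beta_reduce; rw [hRe x]⟩
    exact congrFun h1 z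
  -- for `m ∈ M`, `R m` maps all of `X` into `M`
  have hsub : ∀ m ∈ M, ∀ x, R m x ∈ M := by
    intro m hm
    refine auxFull15 G X e hambit ((R m) ⁻¹' M) (hMc.preimage (hRc m)) ?_ ?_
    · intro g x hx
      show R m (g • x) ∈ M
      rw [hReq m]
      exact hMinv g _ hx
    · show R m e ∈ M
      rw [hRe m]; exact hm
  -- for `m ∈ M`, `x ↦ R m x` maps `M` onto `M`
  have hsurjM : ∀ m ∈ M, ∀ n ∈ M, ∃ x ∈ M, R m x = n := by
    intro m hm n hn
    have himg : R m '' M = M := by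
      refine hMmin _ ?_ ⟨R m hMne.choose, hMne.choose, hMne.choose_spec, rfl⟩ ?_ ?_
      · rintro _ ⟨x, hx, rfl⟩; exact hsub m hm x
      · exact ((hMc.isCompact.image (hRc m)).isClosed)
      · rintro g _ ⟨x, hx, rfl⟩
        exact ⟨g • x, hMinv g x hx, hReq m g x⟩
    rw [← himg] at hn
    obtain ⟨x, hx, hxe⟩ := hn
    exact ⟨x, hx, hxe⟩
  -- instances on the subtype `M`
  letI : MulAction G M :=
    { smul := fun g x => ⟨g • (x : X), hMinv g x x.2⟩,
      one_smul := fun x => Subtype.ext (one_smul G (x : X)),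
      mul_smul := fun g h x => Subtype.ext (mul_smul g h (x : X)) }
  haveI : CompactSpace M := isCompact_iff_compactSpace.mp hMc.isCompact
  haveI : ContinuousSMul G M := ⟨by
    apply Continuous.subtype_mk
    exact continuous_smul.comp ((continuous_id.prodMap continuous_subtype_val))⟩
  haveI : Nonempty M := ⟨⟨hMne.choose, hMne.choose_spec⟩⟩
  -- idempotent in `M` (Ellis–Numakura)
  letI : Semigroup M :=
    { mul := fun a b => ⟨R (b : X) (a : X), hsub b b.2 a⟩,
      mul_assoc := fun a b c => Subtype.ext (hassoc (b : X) (c : X) (a : X)) }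
  obtain ⟨u, hu⟩ : ∃ u : M, u * u = u :=
    exists_idempotent_of_compact_t2_of_continuous_mul_left fun r =>
      Continuous.subtype_mk ((hRc (r : X)).comp continuous_subtype_val) _
  have huu : R (u : X) (u : X) = (u : X) := congrArg Subtype.val hu
  -- `u` is a right identity on `M`
  have hrid : ∀ m ∈ M, R (u : X) m = m := by
    intro m hm
    obtain ⟨x, -, hx⟩ := hsurjM (u : X) u.2 m hm
    rw [← hx, hassoc, huu]
  -- `f` is right translation by `a := f u`
  set a : X := (f u : X) with ha
  have haM : a ∈ M := (f u).2
  have hkey : ∀ m : M, (f m : X) = R a (m : X) := by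
    intro m
    have h1 : (fun x => f ⟨R (u : X) x, hsub _ u.2 x⟩) = fun x => (⟨R a x, hsub _ haM x⟩ : M) := by
      refine (hambit M (f u)).unique
        ⟨hfc.comp (Continuous.subtype_mk (hRc _) _), fun g x => ?_, ?_⟩
        ⟨Continuous.subtype_mk (hRc _) _, fun g x => Subtype.ext (hReq _ g x),
          Subtype.ext (hRe a)⟩
      · show f ⟨R (u : X) (g • x), hsub _ u.2 _⟩ = g • f ⟨R (u : X) x, hsub _ u.2 x⟩
        have h2 : (⟨R (u : X) (g • x), hsub _ u.2 _⟩ : M)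
            = ⟨g • (R (u : X) x), hMinv g _ (hsub _ u.2 x)⟩ := Subtype.ext (hReq _ g x)
        rw [h2]
        exact hfe g ⟨R (u : X) x, hsub _ u.2 x⟩
      · show f ⟨R (u : X) e, hsub _ u.2 _⟩ = f u
        exact congrArg f (Subtype.ext (hRe (u : X)))
    have := congrFun h1 (m : X)
    have h3 : (⟨R (u : X) (m : X), hsub _ u.2 _⟩ : M) = m := Subtype.ext (hrid _ m.2)
    rw [h3] at this
    exact congrArg Subtype.val this
  -- injectivity
  obtain ⟨b, hbM, hba⟩ := hsurjM a haM (u : X) u.2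
  constructor
  · intro m₁ m₂ hm
    obtain ⟨n₁, hn₁, hn₁e⟩ := hsurjM b hbM (m₁ : X) m₁.2
    obtain ⟨n₂, hn₂, hn₂e⟩ := hsurjM b hbM (m₂ : X) m₂.2
    have h12 : R a (m₁ : X) = R a (m₂ : X) := by
      rw [← hkey m₁, ← hkey m₂, hm]
    rw [← hn₁e, ← hn₂e, hassoc, hassoc, hba, hrid _ hn₁, hrid _ hn₂] at h12
    apply Subtype.ext
    rw [← hn₁e, ← hn₂e, h12]
  · intro n
    obtain ⟨x, hxM, hx⟩ := hsurjM a haM (n : X) n.2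
    exact ⟨⟨x, hxM⟩, Subtype.ext (by rw [hkey]; exact hx)⟩
end

section
/- Let G be a topological group and let M be a universal minimal compact G-space. Then every G-map f : M → M is bijective, and hence a G-equivariant homeomorphism of M onto itself. -/
universe u v

open Function Set

section EllisSemigroup

variable {G : Type u} [Group G] [TopologicalSpace G]
variable {M : Type v} [TopologicalSpace M] [CompactSpace M] [T2Space M]
  [MulAction G M] [ContinuousSMul G M]

/-- The Ellis semigroup: the closure of the set of translations in `M → M`
(product topology). -/
def ellis (G : Type u) (M : Type v) [TopologicalSpace M] [SMul G M] : Set (M → M) :=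
  closure (Set.range fun g : G => (g • · : M → M))

/-- Composition as a semigroup structure on `M → M`. -/
def compSemigroup (M : Type v) : Semigroup (M → M) :=
  { mul := fun p q => p ∘ q, mul_assoc := fun _ _ _ => rfl }

/-- Right multiplication (precomposition) is continuous on `M → M`. -/
theorem rho_continuous (r : M → M) : Continuous fun p : M → M => p ∘ r :=
  continuous_pi fun x => continuous_apply (r x)

theorem ellis_isClosed : IsClosed (ellis G M) := isClosed_closure

theorem ellis_nonempty : (ellis G M).Nonempty :=
  ⟨fun x => (1 : G) • x, subset_closure ⟨1, rfl⟩⟩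

theorem smul_mem_ellis (g : G) {p : M → M} (hp : p ∈ ellis G M) : g • p ∈ ellis G M := by
  have hgc : Continuous fun q : M → M => g • q :=
    continuous_pi fun x => (continuous_const_smul g).comp (continuous_apply x)
  refine map_mem_closure hgc hp ?_
  rintro _ ⟨g', rfl⟩
  exact ⟨g * g', funext fun x => mul_smul g g' x⟩

theorem comp_mem_of_invariant {A : Set (M → M)} (hAcl : IsClosed A)
    (hAinv : ∀ g : G, ∀ p ∈ A, g • p ∈ A) {p q : M → M}
    (hp : p ∈ ellis G M) (hq : q ∈ A) : p ∘ q ∈ A := by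
  have key : (Set.range fun g : G => (g • · : M → M)) ⊆ {p' : M → M | p' ∘ q ∈ A} := by
    rintro _ ⟨g, rfl⟩
    exact hAinv g q hq
  exact closure_minimal key (hAcl.preimage (rho_continuous q)) hp

theorem comp_mem_ellis {p q : M → M} (hp : p ∈ ellis G M) (hq : q ∈ ellis G M) :
    p ∘ q ∈ ellis G M :=
  comp_mem_of_invariant ellis_isClosed (fun g _ hr => smul_mem_ellis g hr) hp hq

/-- Existence of a minimal nonempty closed invariant subset of the Ellis semigroup. -/
theorem exists_minimal_subflow :
    ∃ I : Set (M → M), I ⊆ ellis G M ∧ I.Nonempty ∧ IsClosed I ∧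
      (∀ g : G, ∀ p ∈ I, g • p ∈ I) ∧
      (∀ J : Set (M → M), J ⊆ I → J.Nonempty → IsClosed J →
        (∀ g : G, ∀ p ∈ J, g • p ∈ J) → J = I) := by
  set S : Set (Set (M → M)) :=
    {A | A ⊆ ellis G M ∧ A.Nonempty ∧ IsClosed A ∧ ∀ g : G, ∀ p ∈ A, g • p ∈ A} with hS
  have hES : ellis G M ∈ S :=
    ⟨subset_rfl, ellis_nonempty, ellis_isClosed, fun g _ hp => smul_mem_ellis g hp⟩
  have hchainub : ∀ c ⊆ S, IsChain (· ⊆ ·) c → c.Nonempty →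
      ∃ lb ∈ S, ∀ s ∈ c, lb ⊆ s := by
    intro c hcS hchain hcne
    refine ⟨⋂₀ c, ⟨?_, ?_, ?_, ?_⟩, fun s hs => sInter_subset_of_mem hs⟩
    · obtain ⟨A, hA⟩ := hcne
      exact (sInter_subset_of_mem hA).trans (hcS hA).1
    · haveI : Nonempty c := hcne.to_subtype
      have hdir : DirectedOn (· ⊇ ·) c := by
        intro a ha b hb
        rcases hchain.total ha hb with h | h
        · exact ⟨a, ha, Set.Subset.rfl, h⟩
        · exact ⟨b, hb, h, Set.Subset.rfl⟩
      exact IsCompact.nonempty_sInter_of_directed_nonempty_isCompact_isClosed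
        hdir (fun U hU => (hcS hU).2.1)
        (fun U hU => (hcS hU).2.2.1.isCompact) (fun U hU => (hcS hU).2.2.1)
    · exact isClosed_sInter fun U hU => (hcS hU).2.2.1
    · intro g p hp
      exact mem_sInter.2 fun U hU => (hcS hU).2.2.2 g p (mem_sInter.1 hp U hU)
  obtain ⟨I, -, hImem, hImin⟩ := zorn_superset_nonempty S hchainub (ellis G M) hES
  refine ⟨I, hImem.1, hImem.2.1, hImem.2.2.1, hImem.2.2.2, ?_⟩
  intro J hJI hJne hJcl hJinv
  exact subset_antisymm hJI
    (hImin ⟨hJI.trans hImem.1, hJne, hJcl, hJinv⟩ hJI)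

variable {I : Set (M → M)}

/-- Every idempotent of a minimal left ideal is a right identity for it. -/
theorem idem_right_identity (hIcl : IsClosed I)
    (hIinv : ∀ g : G, ∀ p ∈ I, g • p ∈ I)
    (hImin : ∀ J : Set (M → M), J ⊆ I → J.Nonempty → IsClosed J →
      (∀ g : G, ∀ p ∈ J, g • p ∈ J) → J = I)
    (hIE : I ⊆ ellis G M) {u : M → M} (hu : u ∈ I) (hidem : u ∘ u = u) :
    ∀ p ∈ I, p ∘ u = p := by
  have hJ : (· ∘ u) '' I = I := by
    refine hImin _ ?_ ⟨u ∘ u, ⟨u, hu, rfl⟩⟩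
      ((hIcl.isCompact.image (rho_continuous u)).isClosed) ?_
    · rintro _ ⟨p, hp, rfl⟩
      exact comp_mem_of_invariant hIcl hIinv (hIE hp) hu
    · rintro g _ ⟨p, hp, rfl⟩
      exact ⟨g • p, hIinv g p hp, rfl⟩
  intro p hp
  rw [← hJ] at hp
  obtain ⟨r, -, rfl⟩ := hp
  show r ∘ (u ∘ u) = r ∘ u
  rw [hidem]

/-- In a minimal left ideal one can divide on the left: `I ∘ c = I`. -/
theorem exists_left_div (hIcl : IsClosed I)
    (hIinv : ∀ g : G, ∀ p ∈ I, g • p ∈ I)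
    (hImin : ∀ J : Set (M → M), J ⊆ I → J.Nonempty → IsClosed J →
      (∀ g : G, ∀ p ∈ J, g • p ∈ J) → J = I)
    (hIE : I ⊆ ellis G M) {c : M → M} (hc : c ∈ I) {u : M → M} (hu : u ∈ I) :
    ∃ c' ∈ I, c' ∘ c = u := by
  have hJ : (· ∘ c) '' I = I := by
    refine hImin _ ?_ ⟨c ∘ c, ⟨c, hc, rfl⟩⟩
      ((hIcl.isCompact.image (rho_continuous c)).isClosed) ?_
    · rintro _ ⟨p, hp, rfl⟩
      exact comp_mem_of_invariant hIcl hIinv (hIE hp) hc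
    · rintro g _ ⟨p, hp, rfl⟩
      exact ⟨g • p, hIinv g p hp, rfl⟩
  rw [← hJ] at hu
  obtain ⟨c', hc', h⟩ := hu
  exact ⟨c', hc', h⟩

/-- Any continuous `G`-equivariant self-map of a minimal left ideal of the Ellis
semigroup is injective. -/
theorem endo_injective (hIE : I ⊆ ellis G M) (hIne : I.Nonempty) (hIcl : IsClosed I)
    (hIinv : ∀ g : G, ∀ p ∈ I, g • p ∈ I)
    (hImin : ∀ J : Set (M → M), J ⊆ I → J.Nonempty → IsClosed J →
      (∀ g : G, ∀ p ∈ J, g • p ∈ J) → J = I)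
    (h : ↥I → M → M) (hmem : ∀ p, h p ∈ I) (hc : Continuous h)
    (heq : ∀ (g : G) (p : ↥I), h ⟨g • p.1, hIinv g p.1 p.2⟩ = g • h p) :
    Function.Injective h := by
  -- Step 1: `h` is equivariant for the whole Ellis semigroup.
  have hE : ∀ (p' : ↥(ellis G M)) (q : ↥I),
      h ⟨p'.1 ∘ q.1, comp_mem_of_invariant hIcl hIinv p'.2 q.2⟩ = p'.1 ∘ h q := by
    intro p' q
    haveI : CompactSpace ↥(ellis G M) :=
      isCompact_iff_compactSpace.mp (ellis_isClosed.isCompact)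
    set C : Set ↥(ellis G M) :=
      {r | h ⟨r.1 ∘ q.1, comp_mem_of_invariant hIcl hIinv r.2 q.2⟩ = r.1 ∘ h q} with hC
    have hCcl : IsClosed C := by
      refine isClosed_eq (hc.comp ?_) ?_
      · exact ((rho_continuous q.1).comp continuous_subtype_val).subtype_mk _
      · exact continuous_pi fun x =>
          (continuous_apply (h q x)).comp continuous_subtype_val
    have hval : ellis G M ⊆ Subtype.val '' C := by
      refine closure_minimal ?_
        (((hCcl.isCompact.image continuous_subtype_val)).isClosed)
      rintro _ ⟨g, rfl⟩
      refine ⟨⟨(g • · : M → M), subset_closure ⟨g, rfl⟩⟩, ?_, rfl⟩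
      show h ⟨(g • · : M → M) ∘ q.1, _⟩ = (g • · : M → M) ∘ h q
      have e1 : ((g • · : M → M) ∘ q.1) = g • q.1 := rfl
      have e2 : (⟨(g • · : M → M) ∘ q.1, comp_mem_of_invariant hIcl hIinv
          (subset_closure ⟨g, rfl⟩) q.2⟩ : ↥I) = ⟨g • q.1, hIinv g q.1 q.2⟩ :=
        Subtype.ext e1
      rw [e2, heq g q]
      rfl
    obtain ⟨r, hr, hrv⟩ := hval p'.2
    have : r = p' := Subtype.ext hrv
    rw [← this]
    exact hr
  -- Step 2: there is an idempotent in `I`.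
  obtain ⟨u, hu, hidem⟩ :=
    @exists_idempotent_in_compact_subsemigroup (M → M) (compSemigroup M) _ _
      (fun r => rho_continuous r) I hIne hIcl.isCompact
      (fun p hp q hq => comp_mem_of_invariant hIcl hIinv (hIE hp) hq)
  have hidem' : u ∘ u = u := hidem
  have hru : ∀ p ∈ I, p ∘ u = p :=
    idem_right_identity hIcl hIinv hImin hIE hu hidem'
  -- Step 3: `h` is right multiplication by `c := h u`.
  set c : M → M := h ⟨u, hu⟩ with hcdef
  have hcI : c ∈ I := hmem _
  have hform : ∀ p : ↥I, h p = p.1 ∘ c := by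
    intro p
    have h1 := hE ⟨p.1, hIE p.2⟩ ⟨u, hu⟩
    have h2 : (⟨p.1 ∘ u, comp_mem_of_invariant hIcl hIinv (hIE p.2) hu⟩ : ↥I) = p :=
      Subtype.ext (hru p.1 p.2)
    rw [h2] at h1
    exact h1
  -- Step 4: right multiplication by `c` is injective.
  obtain ⟨c', hc', hc'c⟩ := exists_left_div hIcl hIinv hImin hIE hcI hu
  have hvI : c ∘ c' ∈ I := comp_mem_of_invariant hIcl hIinv (hIE hcI) hc'
  have hvidem : (c ∘ c') ∘ (c ∘ c') = c ∘ c' := by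
    show c ∘ (c' ∘ c) ∘ c' = c ∘ c'
    rw [hc'c]
    show (c ∘ u) ∘ c' = c ∘ c'
    rw [hru c hcI]
  have hrv := idem_right_identity hIcl hIinv hImin hIE hvI hvidem
  intro p q hpq
  have h1 : p.1 ∘ c = q.1 ∘ c := by rw [← hform p, ← hform q, hpq]
  have h2 : p.1 ∘ (c ∘ c') = q.1 ∘ (c ∘ c') := by
    show (p.1 ∘ c) ∘ c' = (q.1 ∘ c) ∘ c'
    rw [h1]
  refine Subtype.ext ?_
  rw [← hrv p.1 p.2, ← hrv q.1 q.2, h2]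

end EllisSemigroup

/-- Every `G`-self-map of a universal minimal compact `G`-space `M` is bijective, hence a
`G`-equivariant homeomorphism of `M` onto itself. -/
theorem statement16 (G : Type u) [Group G] [TopologicalSpace G] [IsTopologicalGroup G]
    (M : Type v) [TopologicalSpace M] [CompactSpace M] [T2Space M] [Nonempty M]
    [MulAction G M] [ContinuousSMul G M]
    (hmin : ∀ A : Set M, A.Nonempty → IsClosed A →
      (∀ (g : G), ∀ x ∈ A, g • x ∈ A) → A = Set.univ)
    (huniv : ∀ (Y : Type v) [TopologicalSpace Y] [CompactSpace Y] [T2Space Y]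
      [MulAction G Y] [ContinuousSMul G Y], Nonempty Y →
      ∃ f : M → Y, Continuous f ∧ ∀ (g : G) (x : M), f (g • x) = g • f x) :
    ∀ f : M → M, Continuous f → (∀ (g : G) (x : M), f (g • x) = g • f x) →
      Function.Bijective f ∧
        ∃ h : M ≃ₜ M, (∀ x : M, h x = f x) ∧ ∀ (g : G) (x : M), h (g • x) = g • h x := by
  intro f hf hfeq
  -- Surjectivity, from minimality of `M`.
  have hsurj : Function.Surjective f := by
    have hr : Set.range f = Set.univ := by
      refine hmin _ (Set.range_nonempty f) (isCompact_range hf).isClosed ?_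
      rintro g _ ⟨x, rfl⟩
      exact ⟨g • x, hfeq g x⟩
    exact Set.range_eq_univ.mp hr
  -- The minimal left ideal of the Ellis semigroup.
  obtain ⟨I, hIE, hIne, hIcl, hIinv, hImin⟩ := exists_minimal_subflow (G := G) (M := M)
  haveI : CompactSpace ↥I := isCompact_iff_compactSpace.mp hIcl.isCompact
  haveI hIne' : Nonempty ↥I := nonempty_subtype.mpr hIne
  letI : MulAction G ↥I :=
    { smul := fun g p => ⟨g • p.1, hIinv g p.1 p.2⟩
      one_smul := fun p => Subtype.ext (one_smul G p.1)
      mul_smul := fun g g' p => Subtype.ext (mul_smul g g' p.1) }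
  haveI : ContinuousSMul G ↥I := by
    refine ⟨?_⟩
    have : Continuous fun gp : G × ↥I => gp.1 • (gp.2 : M → M) :=
      continuous_fst.smul (continuous_subtype_val.comp continuous_snd)
    exact this.subtype_mk _
  obtain ⟨φ, hφc, hφeq⟩ := huniv ↥I hIne'
  obtain ⟨x₀⟩ := ‹Nonempty M›
  -- evaluation at `x₀` maps `I` onto `M`
  have hψsurj : ∀ a : M, ∃ p : ↥I, p.1 x₀ = a := by
    have hr : Set.range (fun p : ↥I => p.1 x₀) = Set.univ := by
      refine hmin _ (Set.range_nonempty _)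
        (isCompact_range ((continuous_apply x₀).comp continuous_subtype_val)).isClosed ?_
      rintro g _ ⟨p, rfl⟩
      exact ⟨g • p, rfl⟩
    intro a
    have : a ∈ Set.range (fun p : ↥I => p.1 x₀) := by rw [hr]; trivial
    exact this
  -- the induced endomorphism of `I`
  set h : ↥I → M → M := fun p => (φ (f (p.1 x₀))).1 with hh
  have hmem : ∀ p, h p ∈ I := fun p => (φ (f (p.1 x₀))).2
  have hc : Continuous h :=
    continuous_subtype_val.comp
      (hφc.comp (hf.comp ((continuous_apply x₀).comp continuous_subtype_val)))
  have heqv : ∀ (g : G) (p : ↥I), h ⟨g • p.1, hIinv g p.1 p.2⟩ = g • h p := by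
    intro g p
    show (φ (f ((g • p.1) x₀))).1 = g • (φ (f (p.1 x₀))).1
    have e1 : (g • p.1) x₀ = g • (p.1 x₀) := rfl
    rw [e1, hfeq, hφeq]
    rfl
  have hinj := endo_injective hIE hIne hIcl hIinv hImin h hmem hc heqv
  have hfinj : Function.Injective f := by
    intro a b hab
    obtain ⟨p, hp⟩ := hψsurj a
    obtain ⟨q, hq⟩ := hψsurj b
    have hpq : h p = h q := by
      simp only [hh]
      rw [hp, hq, hab]
    have := hinj hpq
    rw [← hp, ← hq, this]
  have hbij : Function.Bijective f := ⟨hfinj, hsurj⟩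
  refine ⟨hbij, ?_⟩
  refine ⟨Continuous.homeoOfEquivCompactToT2 (f := Equiv.ofBijective f hbij) hf,
    fun x => rfl, fun g x => hfeq g x⟩
end
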